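/- arXiv:quant-ph/0307149 — 2 statements merged into one kernel-verified Lean document; each statement's English description precedes it below -/
import Mathlib

section
/- Fix an integer d ≥ 3. There exists a constant c > 0 (depending only on d) such that, as N → ∞ through d-th powers, with M = N^{1/d} and L = ⌊√N/100⌋, for every start vertex h, a snake X drawn from the grid snake distribution D_{h,L} on {1,…,M}^d is c-sparse with probability 1 − o(1). -/
/-- Move from `a` toward `u` along a coordinate line, by at most `s` unit steps,
stalling at `u` once it is reached. -/
def approachN (a u s : ℕ) : ℕ :=
  if a ≤ u then min (a + s) u else max (a - s) u

/-- The macro-step chain on the grid `{0,…,M-1}^d`: `z 0 = h`, and `z (T+1)` equals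
`z T` with coordinate `T mod d` replaced by the fresh uniform value `u T`. -/
def macroChainN {d : ℕ} (h : Fin d → ℕ) (u : ℕ → ℕ) : ℕ → (Fin d → ℕ)
  | 0 => h
  | T + 1 => fun i => if (i : ℕ) = T % d then u T else macroChainN h u T i

/-- The grid snake process with start `h`, driven by the fresh values `u`: during
macro-block `T` (micro-steps `MT, …, MT+M-1`) the snake moves monotonically along
coordinate `T mod d` from its block-start value toward `u T`, stalling once reached. -/
def gridSnake {d : ℕ} (M : ℕ) (h : Fin d → ℕ) (u : ℕ → ℕ) (t : ℕ) : Fin d → ℕ :=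
  fun i =>
    if (i : ℕ) = (t / M) % d then
      approachN (macroChainN h u (t / M) i) (u (t / M)) (t % M)
    else macroChainN h u (t / M) i

/-- Extend a finite string of uniform values in `{0,…,M-1}` to `ℕ → ℕ` (by `0`). -/
def extValsN {s M : ℕ} (ω : Fin s → Fin M) : ℕ → ℕ :=
  fun T => if hT : T < s then (ω ⟨T, hT⟩ : ℕ) else 0

/-- `delta d x v i` is the smallest `k` such that `x` agrees with `v` on every
coordinate outside `{i, i-1, …, i-k+1}` (indices mod `d`). -/
noncomputable def delta {α : Type*} (d : ℕ) (x v : Fin d → α) (i : ℕ) : ℕ :=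
  sInf {k | ∀ j : Fin d, (∀ l < k, (j : ℕ) ≠ (i + d - l) % d) → x j = v j}

/-- A grid snake `x_0, …, x_{L-1}` in `{0,…,M-1}^d` (with `N = M^d`) is `c`-sparse if
for every vertex `v` and every `k ≤ d`,
`|{t < L : Δ(x_t, v, ⌊t/M⌋ mod d) = k}| ≤ (c·log N)·(M + L/M^{d-k})`. -/
noncomputable def IsGridSparse (c : ℝ) (d M L : ℕ) (x : ℕ → Fin d → ℕ) : Prop :=
  ∀ v : Fin d → ℕ, (∀ i, v i < M) → ∀ k ≤ d,
    (((Finset.range L).filter (fun t => delta d (x t) v ((t / M) % d) = k)).card : ℝ)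
      ≤ c * Real.log ((M : ℝ) ^ d) * ((M : ℝ) + (L : ℝ) / (M : ℝ) ^ (d - k))

/-- Probability of an event on a finite sample space, under the uniform distribution. -/
noncomputable def unifPr {Ω : Type*} [Fintype Ω] (P : Ω → Prop) : ℝ :=
  (Nat.card {ω : Ω // P ω} : ℝ) / (Fintype.card Ω : ℝ)


open Finset

/-- index of the block (before `T`) in which coordinate `j` was last refreshed. -/
def tauB (d T j : ℕ) : ℕ := T - 1 - (T - 1 - j) % d

lemma tauB_mod {d : ℕ} (hd : 0 < d) {j : ℕ} (hj : j < d) {T : ℕ} (hT : d ≤ T) :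
    tauB d T j % d = j := by
  have h1 := Nat.div_add_mod (T - 1 - j) d
  have h2 : tauB d T j = j + d * ((T - 1 - j) / d) := by
    unfold tauB; omega
  rw [h2, Nat.add_mul_mod_self_left, Nat.mod_eq_of_lt hj]

lemma tauB_lt {d T j : ℕ} (hT : 1 ≤ T) : tauB d T j < T := by
  unfold tauB; omega

lemma tauB_ge {d T j : ℕ} (hd : 0 < d) : T - d ≤ tauB d T j := by
  have := Nat.mod_lt (T - 1 - j) hd
  unfold tauB; omega

lemma macro_run {d : ℕ} (h : Fin d → ℕ) (u : ℕ → ℕ) (j : Fin d) (T' : ℕ)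
    (hj : (j : ℕ) = T' % d) :
    ∀ s, s < d → macroChainN h u (T' + 1 + s) j = u T' := by
  intro s
  induction s with
  | zero => intro _; simp [macroChainN, hj]
  | succ n ih =>
    intro hn
    have he : T' + 1 + (n + 1) = (T' + 1 + n) + 1 := by ring
    rw [he]
    show (if (j : ℕ) = (T' + 1 + n) % d then u (T' + 1 + n) else macroChainN h u (T' + 1 + n) j) = u T'
    rw [if_neg ?_, ih (by omega)]
    intro hceq
    have hmod : T' % d = (T' + (n + 1)) % d := by rw [← hj, hceq]; ring_nf
    have hdvd : d ∣ (T' + (n + 1)) - T' := (Nat.modEq_iff_dvd' (by omega)).mp hmod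
    have := Nat.le_of_dvd (by omega) hdvd
    omega

lemma macroChainN_eq {d : ℕ} (hd : 0 < d) (h : Fin d → ℕ) (u : ℕ → ℕ) (j : Fin d)
    {T : ℕ} (hT : d ≤ T) :
    macroChainN h u T j = u (tauB d T (j : ℕ)) := by
  have hjd : (j : ℕ) < d := j.isLt
  set s := (T - 1 - (j : ℕ)) % d with hs
  have hsd : s < d := Nat.mod_lt _ hd
  have hsle : s ≤ T - 1 - (j : ℕ) := Nat.mod_le _ _
  have htmod : tauB d T (j : ℕ) % d = (j : ℕ) := tauB_mod hd hjd hT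
  have hTeq : T = tauB d T (j : ℕ) + 1 + s := by unfold tauB; omega
  conv_lhs => rw [hTeq]
  exact macro_run h u j _ htmod.symm s hsd

lemma d_mem_deltaSet {α : Type*} {d : ℕ} (hd : 0 < d) (x v : Fin d → α) (i : ℕ) :
    d ∈ {k | ∀ j : Fin d, (∀ l < k, (j : ℕ) ≠ (i + d - l) % d) → x j = v j} := by
  intro j hj
  exfalso
  have hjd : (j : ℕ) < d := j.isLt
  set a := i + d - (j : ℕ) with ha
  have h1 := Nat.div_add_mod a d
  have h2 : i + d - a % d = d * (a / d) + (j : ℕ) := by omega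
  exact hj (a % d) (Nat.mod_lt _ hd)
    (by rw [h2, Nat.mul_add_mod, Nat.mod_eq_of_lt hjd])

lemma delta_spec {α : Type*} {d : ℕ} (hd : 0 < d) (x v : Fin d → α) (i k : ℕ)
    (hδ : delta d x v i = k) :
    ∀ j : Fin d, (∀ l < k, (j : ℕ) ≠ (i + d - l) % d) → x j = v j := by
  have hne : {k | ∀ j : Fin d, (∀ l < k, (j : ℕ) ≠ (i + d - l) % d) → x j = v j}.Nonempty :=
    ⟨d, d_mem_deltaSet hd x v i⟩
  have hmem := Nat.sInf_mem hne
  rw [show sInf {k | ∀ j : Fin d, (∀ l < k, (j : ℕ) ≠ (i + d - l) % d) → x j = v j} = delta d x v i from rfl, hδ] at hmem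
  exact hmem

/-- coordinates outside the length-`k` window ending at `i`. -/
def OutF (d i k : ℕ) : Finset (Fin d) :=
  univ.filter (fun j => ∀ l < k, (j : ℕ) ≠ (i + d - l) % d)

lemma OutF_card {d : ℕ} (hd : 0 < d) (i k : ℕ) : d - k ≤ (OutF d i k).card := by
  classical
  set W : Finset (Fin d) := (range k).image (fun l => (⟨(i + d - l) % d, Nat.mod_lt _ hd⟩ : Fin d)) with hW
  have hsub : univ \ W ⊆ OutF d i k := by
    intro j hj
    rw [mem_sdiff] at hj
    rw [OutF, mem_filter]
    refine ⟨mem_univ _, fun l hl hEq => hj.2 ?_⟩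
    rw [hW, mem_image]
    exact ⟨l, mem_range.mpr hl, by apply Fin.ext; simp [hEq]⟩
  calc d - k ≤ (univ \ W).card := by
        rw [card_sdiff_of_subset (subset_univ _), card_univ, Fintype.card_fin]
        have h5 := card_image_le (f := fun l => (⟨(i + d - l) % d, Nat.mod_lt _ hd⟩ : Fin d)) (s := range k)
        rw [card_range, ← hW] at h5
        omega
    _ ≤ _ := card_le_card hsub

lemma OutF_ne_i {d : ℕ} {i k : ℕ} (hi : i < d) (hk : 1 ≤ k) :
    ∀ j ∈ OutF d i k, (j : ℕ) ≠ i := by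
  intro j hj
  rw [OutF, mem_filter] at hj
  have := hj.2 0 hk
  simpa [Nat.add_mod_right, Nat.mod_eq_of_lt hi] using this

/-- the `ω`-coordinates constrained by the event `E_{T,k}`. -/
def CEset (d T k : ℕ) : Finset ℕ := (OutF d (T % d) k).image (fun (j : Fin d) => tauB d T (j : ℕ))

lemma CEset_card {d : ℕ} (hd : 0 < d) {T : ℕ} (hT : d ≤ T) (k : ℕ) :
    d - k ≤ (CEset d T k).card := by
  classical
  rw [CEset, card_image_of_injOn]
  · exact OutF_card hd _ k
  · intro j₁ _ j₂ _ hEq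
    simp only at hEq
    apply Fin.ext
    rw [← tauB_mod hd j₁.isLt hT, ← tauB_mod hd j₂.isLt hT, hEq]

lemma CEset_mem {d T k s : ℕ} (hd : 0 < d) (hT : 1 ≤ T) (hs : s ∈ CEset d T k) : T - d ≤ s ∧ s < T := by
  rw [CEset, mem_image] at hs
  obtain ⟨j, _, rfl⟩ := hs
  exact ⟨tauB_ge hd, tauB_lt hT⟩

/-- constraint sets for family `r ∈ [1,d]`: for `r < d` the plain agreement event with
`d - r` constraints; for `r = d` additionally the event `u_T = v_{T mod d}`. -/
def famC (d T r : ℕ) : Finset ℕ := if r = d then insert T (CEset d T 1) else CEset d T (d - r)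

lemma famC_card {d : ℕ} (hd : 0 < d) {T : ℕ} (hT : d ≤ T) {r : ℕ} (hr1 : 1 ≤ r) (hrd : r ≤ d) :
    r ≤ (famC d T r).card := by
  classical
  rw [famC]
  by_cases h : r = d
  · rw [if_pos h]
    have hnot : T ∉ CEset d T 1 := fun hc => absurd (CEset_mem hd (by omega) hc).2 (by omega)
    rw [card_insert_of_notMem hnot]
    have := CEset_card hd hT (k := 1)
    omega
  · rw [if_neg h]
    have := CEset_card hd hT (k := d - r)
    omega

lemma famC_mem {d T r s : ℕ} (hd : 0 < d) (hT : 1 ≤ T) (hs : s ∈ famC d T r) : T - d ≤ s ∧ s ≤ T := by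
  rw [famC] at hs
  by_cases h : r = d
  · rw [if_pos h, mem_insert] at hs
    rcases hs with rfl | hs
    · omega
    · have := CEset_mem hd hT hs; omega
  · rw [if_neg h] at hs
    have := CEset_mem hd hT hs; omega

open scoped Classical in
lemma card_constrained (L M : ℕ) (B : Finset ℕ) (hB : ∀ s ∈ B, s < L) (g : ℕ → ℕ) :
    (univ.filter fun ω : Fin L → Fin M => ∀ s ∈ B, extValsN ω s = g s).card * M ^ B.card
      ≤ M ^ L := by
  set S := univ.filter fun ω : Fin L → Fin M => ∀ s ∈ B, extValsN ω s = g s with hS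
  have hBL : B.card ≤ L := by
    have : B ⊆ range L := fun s hs => mem_range.mpr (hB s hs)
    calc B.card ≤ (range L).card := card_le_card this
      _ = L := card_range L
  have hcard1 : (univ.filter fun t : Fin L => (t : ℕ) ∈ B).card = B.card := by
    rw [← card_image_of_injOn (f := Fin.val) (Fin.val_injective.injOn)]
    congr 1
    ext s
    simp only [mem_image, mem_filter, mem_univ, true_and]
    constructor
    · rintro ⟨t, ht, rfl⟩; exact ht
    · intro hs; exact ⟨⟨s, hB s hs⟩, hs, rfl⟩
  have hcard2 : Fintype.card {t : Fin L // (t : ℕ) ∉ B} = L - B.card := by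
    rw [Fintype.card_subtype]
    have := card_filter_add_card_filter_not (s := (univ : Finset (Fin L)))
      (p := fun t : Fin L => (t : ℕ) ∈ B)
    simp only [card_univ, Fintype.card_fin] at this
    have h3 : (filter (fun t : Fin L => ¬ (t : ℕ) ∈ B) univ).card = L - B.card := by omega
    convert h3 using 2
  have h1 : S.card ≤ M ^ (L - B.card) := by
    rw [← Fintype.card_coe S]
    have hinj : Function.Injective
        (fun (ω : {ω : Fin L → Fin M // ω ∈ S}) => (fun (t : {t : Fin L // (t : ℕ) ∉ B}) => ω.1 t.1)) := by
      intro ω₁ ω₂ hEq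
      apply Subtype.ext
      funext t
      by_cases hc : (t : ℕ) ∈ B
      · have e1 : ∀ (ω : {ω : Fin L → Fin M // ω ∈ S}), (ω.1 t : ℕ) = g (t : ℕ) := by
          intro ω
          have := (mem_filter.mp ω.2).2 (t : ℕ) hc
          rwa [extValsN, dif_pos t.isLt, Fin.eta] at this
        exact Fin.val_injective ((e1 ω₁).trans (e1 ω₂).symm)
      · exact congrFun hEq ⟨t, hc⟩
    calc Fintype.card {ω : Fin L → Fin M // ω ∈ S}
        ≤ Fintype.card ({t : Fin L // (t : ℕ) ∉ B} → Fin M) := Fintype.card_le_of_injective _ hinj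
      _ = M ^ (L - B.card) := by rw [Fintype.card_fun, Fintype.card_fin, hcard2]
  calc S.card * M ^ B.card ≤ M ^ (L - B.card) * M ^ B.card := Nat.mul_le_mul_right _ h1
    _ = M ^ L := by rw [← pow_add, Nat.sub_add_cancel hBL]

open scoped Classical in
lemma core_bound (L M : ℕ) (hM : 1 ≤ M) (ι : Finset ℕ) (C : ℕ → Finset ℕ) (g : ℕ → ℕ)
    (r m : ℕ)
    (hCL : ∀ T ∈ ι, ∀ s ∈ C T, s < L)
    (hCr : ∀ T ∈ ι, r ≤ (C T).card)
    (hdisj : ∀ T ∈ ι, ∀ T' ∈ ι, T ≠ T' → Disjoint (C T) (C T')) :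
    ((univ.filter fun ω : Fin L → Fin M =>
        m ≤ (ι.filter fun T => ∀ s ∈ C T, extValsN ω s = g s).card).card : ℝ) * 2 ^ m
      ≤ (M : ℝ) ^ L * (1 + ((M : ℝ) ^ r)⁻¹) ^ ι.card := by
  have hMR : (0:ℝ) < (M:ℝ) := by exact_mod_cast hM
  set E : ℕ → (Fin L → Fin M) → Prop := fun T ω => ∀ s ∈ C T, extValsN ω s = g s with hE
  set Y : (Fin L → Fin M) → ℕ := fun ω => (ι.filter fun T => E T ω).card with hY
  set bad := univ.filter fun ω : Fin L → Fin M => m ≤ Y ω with hbad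
  -- Step A+B in ℕ
  have hstep : bad.card * 2 ^ m ≤
      ∑ A ∈ ι.powerset, (univ.filter fun ω : Fin L → Fin M => ∀ T ∈ A, E T ω).card := by
    have hA : bad.card * 2 ^ m ≤ ∑ ω ∈ (univ : Finset (Fin L → Fin M)), 2 ^ Y ω := by
      calc bad.card * 2 ^ m = ∑ _ω ∈ bad, 2 ^ m := by rw [sum_const, smul_eq_mul]
        _ ≤ ∑ ω ∈ bad, 2 ^ Y ω := by
            apply sum_le_sum
            intro ω hω
            exact Nat.pow_le_pow_right (by norm_num) (mem_filter.mp hω).2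
        _ ≤ ∑ ω ∈ (univ : Finset (Fin L → Fin M)), 2 ^ Y ω :=
            sum_le_sum_of_subset (subset_univ _)
    have hB : ∀ ω : Fin L → Fin M,
        2 ^ Y ω = ∑ A ∈ ι.powerset, (if ∀ T ∈ A, E T ω then 1 else 0) := by
      intro ω
      have hps : (ι.filter fun T => E T ω).powerset
          = ι.powerset.filter (fun A => ∀ T ∈ A, E T ω) := by
        ext A
        simp only [mem_powerset, mem_filter]
        constructor
        · intro hsub
          refine ⟨hsub.trans (filter_subset _ _), fun T hT => (mem_filter.mp (hsub hT)).2⟩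
        · rintro ⟨h1, h2⟩ T hT
          exact mem_filter.mpr ⟨h1 hT, h2 T hT⟩
      calc 2 ^ Y ω = (ι.filter fun T => E T ω).powerset.card := by rw [card_powerset]
        _ = (ι.powerset.filter (fun A => ∀ T ∈ A, E T ω)).card := by rw [hps]
        _ = ∑ A ∈ ι.powerset, (if ∀ T ∈ A, E T ω then 1 else 0) := by
            rw [card_filter]
    calc bad.card * 2 ^ m ≤ ∑ ω ∈ (univ : Finset (Fin L → Fin M)), 2 ^ Y ω := hA
      _ = ∑ ω ∈ (univ : Finset (Fin L → Fin M)), ∑ A ∈ ι.powerset,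
            (if ∀ T ∈ A, E T ω then 1 else 0) := by
          exact sum_congr rfl fun ω _ => hB ω
      _ = ∑ A ∈ ι.powerset, ∑ ω ∈ (univ : Finset (Fin L → Fin M)),
            (if ∀ T ∈ A, E T ω then 1 else 0) := sum_comm
      _ = ∑ A ∈ ι.powerset, (univ.filter fun ω : Fin L → Fin M => ∀ T ∈ A, E T ω).card := by
          exact sum_congr rfl fun A _ => (card_filter _ _).symm
  -- Step C : each term bounded in ℝ
  have hterm : ∀ A ∈ ι.powerset,
      ((univ.filter fun ω : Fin L → Fin M => ∀ T ∈ A, E T ω).card : ℝ)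
        ≤ (M : ℝ) ^ L * (((M : ℝ) ^ r)⁻¹) ^ A.card := by
    intro A hA
    rw [mem_powerset] at hA
    set B := A.biUnion C with hBdef
    have hfe : (univ.filter fun ω : Fin L → Fin M => ∀ T ∈ A, E T ω)
        = (univ.filter fun ω : Fin L → Fin M => ∀ s ∈ B, extValsN ω s = g s) := by
      apply filter_congr
      intro ω _
      simp only [hBdef, mem_biUnion, hE, eq_iff_iff]
      constructor
      · rintro hall s ⟨T, hT, hsT⟩
        exact hall T hT s hsT
      · intro hall T hT s hsT
        exact hall s ⟨T, hT, hsT⟩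
    have hBL : ∀ s ∈ B, s < L := by
      intro s hs
      rw [hBdef, mem_biUnion] at hs
      obtain ⟨T, hT, hsT⟩ := hs
      exact hCL T (hA hT) s hsT
    have hcc := card_constrained L M B hBL g
    have hBcard : r * A.card ≤ B.card := by
      rw [hBdef, card_biUnion (fun T hT T' hT' hne => hdisj T (hA hT) T' (hA hT') hne)]
      calc r * A.card = ∑ _T ∈ A, r := by rw [sum_const, smul_eq_mul, mul_comm]
        _ ≤ ∑ T ∈ A, (C T).card := sum_le_sum fun T hT => hCr T (hA hT)
    have hnat : (univ.filter fun ω : Fin L → Fin M => ∀ T ∈ A, E T ω).card * M ^ (r * A.card)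
        ≤ M ^ L := by
      rw [hfe]
      calc _ ≤ (univ.filter fun ω : Fin L → Fin M => ∀ s ∈ B, extValsN ω s = g s).card * M ^ B.card :=
            Nat.mul_le_mul_left _ (Nat.pow_le_pow_right hM hBcard)
        _ ≤ M ^ L := hcc
    have hR : ((univ.filter fun ω : Fin L → Fin M => ∀ T ∈ A, E T ω).card : ℝ) * (M:ℝ) ^ (r * A.card)
        ≤ (M:ℝ) ^ L := by exact_mod_cast hnat
    have hpow : (0:ℝ) < (M:ℝ) ^ (r * A.card) := by positivity
    rw [← le_div_iff₀ hpow] at hR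
    calc ((univ.filter fun ω : Fin L → Fin M => ∀ T ∈ A, E T ω).card : ℝ)
        ≤ (M:ℝ) ^ L / (M:ℝ) ^ (r * A.card) := hR
      _ = (M : ℝ) ^ L * (((M : ℝ) ^ r)⁻¹) ^ A.card := by
          rw [div_eq_mul_inv]
          congr 1
          rw [inv_pow, ← pow_mul]
  -- combine
  have hcast : (bad.card : ℝ) * 2 ^ m ≤
      ∑ A ∈ ι.powerset, ((univ.filter fun ω : Fin L → Fin M => ∀ T ∈ A, E T ω).card : ℝ) := by
    have := hstep
    calc (bad.card : ℝ) * 2 ^ m = ((bad.card * 2 ^ m : ℕ) : ℝ) := by push_cast; ring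
      _ ≤ _ := by exact_mod_cast hstep
  calc (bad.card : ℝ) * 2 ^ m
      ≤ ∑ A ∈ ι.powerset, ((univ.filter fun ω : Fin L → Fin M => ∀ T ∈ A, E T ω).card : ℝ) := hcast
    _ ≤ ∑ A ∈ ι.powerset, (M : ℝ) ^ L * (((M : ℝ) ^ r)⁻¹) ^ A.card := sum_le_sum hterm
    _ = (M : ℝ) ^ L * ∑ A ∈ ι.powerset, (((M : ℝ) ^ r)⁻¹) ^ A.card := by rw [mul_sum]
    _ = (M : ℝ) ^ L * (1 + ((M : ℝ) ^ r)⁻¹) ^ ι.card := by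
        congr 1
        have := Finset.prod_add (fun _ : ℕ => ((M : ℝ) ^ r)⁻¹) (fun _ : ℕ => (1:ℝ)) ι
        simp only [prod_const, one_pow, mul_one] at this
        rw [← this]
        rw [add_comm]

open scoped Classical in
lemma class_card_bound (L M d : ℕ) (hM : 2 ≤ M) (nB : ℕ) (ι : Finset ℕ) (hι : ι.card ≤ nB)
    (C : ℕ → Finset ℕ) (g : ℕ → ℕ) (r : ℕ)
    (hCL : ∀ T ∈ ι, ∀ s ∈ C T, s < L)
    (hCr : ∀ T ∈ ι, r ≤ (C T).card)
    (hdisj : ∀ T ∈ ι, ∀ T' ∈ ι, T ≠ T' → Disjoint (C T) (C T')) :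
    ((univ.filter fun ω : Fin L → Fin M =>
        2 * d * (Nat.log 2 M + 1) + 2 * (nB / M ^ r) + 2
          ≤ (ι.filter fun T => ∀ s ∈ C T, extValsN ω s = g s).card).card : ℝ)
      ≤ (M : ℝ) ^ L / (M : ℝ) ^ (2 * d) := by
  set m₁ := 2 * d * (Nat.log 2 M + 1) with hm₁
  set q := nB / M ^ r with hq
  set m := m₁ + 2 * q + 2 with hm
  have hM1 : 1 ≤ M := by omega
  have hMr0 : (0:ℝ) < (M:ℝ) ^ r := by positivity
  have hcore := core_bound L M hM1 ι C g r m hCL hCr hdisj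
  set p : ℝ := ((M:ℝ) ^ r)⁻¹ with hp
  have hp0 : 0 ≤ p := by positivity
  -- (1+p)^#ι ≤ exp (q+1)
  have hq1 : (ι.card : ℝ) * p ≤ (q : ℝ) + 1 := by
    have hnatlt : nB < M ^ r * (q + 1) := by
      have h1 := Nat.div_add_mod nB (M ^ r)
      have h2 := Nat.mod_lt nB (show 0 < M ^ r by positivity)
      rw [hq, Nat.mul_succ]
      omega
    have hR : (nB : ℝ) ≤ ((q:ℝ) + 1) * (M:ℝ) ^ r := by
      have : (nB : ℝ) < ((M:ℝ) ^ r) * ((q:ℝ) + 1) := by exact_mod_cast hnatlt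
      linarith
    have hcard : (ι.card : ℝ) ≤ (nB : ℝ) := by exact_mod_cast hι
    rw [hp, mul_inv_le_iff₀ hMr0]
    linarith
  have hexp1 : (1 + p) ^ ι.card ≤ Real.exp ((q : ℝ) + 1) := by
    calc (1 + p) ^ ι.card ≤ (Real.exp p) ^ ι.card := by
          apply pow_le_pow_left₀ (by linarith)
          linarith [Real.add_one_le_exp p]
      _ = Real.exp ((ι.card : ℝ) * p) := by rw [← Real.exp_nat_mul]
      _ ≤ Real.exp ((q : ℝ) + 1) := Real.exp_le_exp.mpr hq1
  have hexp2 : Real.exp ((q : ℝ) + 1) ≤ 4 ^ (q + 1) := by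
    have : Real.exp ((q : ℝ) + 1) = Real.exp 1 ^ (q + 1) := by
      rw [← Real.exp_nat_mul]
      norm_num
    rw [this]
    apply pow_le_pow_left₀ (Real.exp_pos 1).le
    linarith [Real.exp_one_lt_d9]
  have h2m : (2:ℝ) ^ m = 2 ^ m₁ * 4 ^ (q + 1) := by
    have h4eq : (4:ℝ) = 2 ^ 2 := by norm_num
    conv_rhs => rw [h4eq, ← pow_mul, ← pow_add]
    congr 1
  have hm₁M : (M:ℝ) ^ (2*d) ≤ 2 ^ m₁ := by
    have hnat : M ^ (2*d) ≤ 2 ^ m₁ := by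
      have h0 : M ≤ 2 ^ (Nat.log 2 M + 1) := (Nat.lt_pow_succ_log_self one_lt_two M).le
      calc M ^ (2*d) ≤ (2 ^ (Nat.log 2 M + 1)) ^ (2*d) := Nat.pow_le_pow_left h0 _
        _ = 2 ^ m₁ := by rw [← pow_mul, hm₁]; congr 1; ring
    exact_mod_cast hnat
  -- combine
  set X := ((univ.filter fun ω : Fin L → Fin M =>
      m ≤ (ι.filter fun T => ∀ s ∈ C T, extValsN ω s = g s).card).card : ℝ) with hX
  have hXnn : 0 ≤ X := by positivity
  have hML : (0:ℝ) < (M:ℝ)^L := by positivity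
  have h4 : (0:ℝ) < 4 ^ (q+1) := by positivity
  have key : X * (2 ^ m₁ * 4 ^ (q + 1)) ≤ (M:ℝ) ^ L * 4 ^ (q+1) := by
    calc X * (2 ^ m₁ * 4 ^ (q + 1)) = X * 2 ^ m := by rw [h2m]
      _ ≤ (M : ℝ) ^ L * (1 + p) ^ ι.card := hcore
      _ ≤ (M:ℝ) ^ L * 4 ^ (q+1) := by
          apply mul_le_mul_of_nonneg_left _ hML.le
          exact hexp1.trans hexp2
  have key2 : X * 2 ^ m₁ ≤ (M:ℝ) ^ L := by
    have key' : (X * 2 ^ m₁) * 4 ^ (q + 1) ≤ (M:ℝ) ^ L * 4 ^ (q + 1) := by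
      rw [mul_assoc]; exact key
    exact le_of_mul_le_mul_right key' h4
  rw [le_div_iff₀ (show (0:ℝ) < (M:ℝ) ^ (2*d) by positivity)]
  calc X * (M:ℝ) ^ (2*d) ≤ X * 2 ^ m₁ := mul_le_mul_of_nonneg_left hm₁M hXnn
    _ ≤ (M:ℝ) ^ L := key2

lemma final_real (dR X P Q S1 : ℝ) (hd : 3 ≤ dR) (hX : 1 ≤ X) (hP : 3 ≤ P) (hQ : 0 ≤ Q)
    (hS : S1 ≤ dR*P + 2*(dR+1)*(6*dR*X*P + 2*Q + 4*P)) :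
    S1 ≤ 100*(dR+1)*(dR*X)*(P + Q) := by
  have hd0 : (0:ℝ) ≤ dR := by linarith
  have hP0 : (0:ℝ) ≤ P := by linarith
  have c1 : dR*P ≤ (dR+1)*(dR*X)*P := by
    nlinarith [mul_nonneg (mul_nonneg hd0 hP0) (by nlinarith : (0:ℝ) ≤ (dR+1)*X - 1)]
  have c3 : 2*(dR+1)*(2*Q) ≤ 4*((dR+1)*(dR*X)*Q) := by
    nlinarith [mul_nonneg (mul_nonneg (by linarith : (0:ℝ) ≤ dR+1) hQ) (by nlinarith : (0:ℝ) ≤ dR*X - 1)]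
  have c4 : 2*(dR+1)*(4*P) ≤ 8*((dR+1)*(dR*X)*P) := by
    nlinarith [mul_nonneg (mul_nonneg (by linarith : (0:ℝ) ≤ dR+1) hP0) (by nlinarith : (0:ℝ) ≤ dR*X - 1)]
  have hA : (0:ℝ) ≤ (dR+1)*(dR*X)*P := by nlinarith
  have hB : (0:ℝ) ≤ (dR+1)*(dR*X)*Q := by nlinarith
  nlinarith [c1, c3, c4, hA, hB]

lemma Mq_bound (P R qr Q LL : ℝ) (hP : 0 < P) (hR1 : 1 ≤ R) (hqr : 0 ≤ qr)
    (f1 : qr * R ≤ LL / P + 1) (hQR : Q * R = LL) : P * qr ≤ Q + P := by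
  have hR0 : 0 < R := by linarith
  have hPL : P * (LL / P + 1) = LL + P := by
    rw [mul_add, mul_one, mul_div_cancel₀ _ (ne_of_gt hP)]
  have h2 : P * qr * R ≤ LL + P := by
    calc P * qr * R = P * (qr * R) := by ring
      _ ≤ P * (LL / P + 1) := by nlinarith
      _ = LL + P := hPL
  nlinarith [mul_le_mul_of_nonneg_left hR1 (by positivity : (0:ℝ) ≤ P)]

lemma Mmm_bound (P X dR mmr qr Q : ℝ) (hP : 0 < P) (hd : 0 ≤ dR) (hX : 0 ≤ X)
    (hmm' : mmr ≤ 6*dR*X + 2*qr + 2) (hMq : P * qr ≤ Q + P) :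
    P * mmr ≤ 6*dR*X*P + 2*Q + 4*P := by
  nlinarith [mul_le_mul_of_nonneg_left hmm' hP.le]

lemma S2_bound (S1 dR P A mmr : ℝ) (hd : 0 ≤ dR) (hA0 : 0 ≤ A)
    (hc : S1 ≤ dR*P + P*((dR+1)*mmr)) (hA : P*mmr ≤ A) : S1 ≤ dR*P + 2*(dR+1)*A := by
  nlinarith [mul_le_mul_of_nonneg_left hA (by linarith : (0:ℝ) ≤ dR+1)]

lemma qA_bound (R' qA Q LL P : ℝ) (hR' : 1 ≤ R') (hP : 0 < P) (hqA : 0 ≤ qA)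
    (f1 : qA * R' ≤ LL / P + 1) (hQR : Q * (R' * P) = LL) (hQ : 0 ≤ Q) : qA ≤ Q + 1 := by
  have hLLP : LL / P = Q * R' := by
    rw [eq_comm, eq_div_iff (ne_of_gt hP)]
    linarith [hQR]
  rw [hLLP] at f1
  nlinarith

lemma S20_bound (S1 dR P X Q qA qB mmA mmB : ℝ) (hd : 3 ≤ dR) (hX : 1 ≤ X) (hP : 3 ≤ P)
    (hQ : 0 ≤ Q) (hqB : 0 ≤ qB)
    (hc : S1 ≤ dR*P + ((dR+1)*mmA + P*((dR+1)*mmB)))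
    (hmmA : mmA ≤ 6*dR*X + 2*qA + 2) (hqA : qA ≤ Q + 1)
    (hmmB : mmB ≤ 6*dR*X + 2*qB + 2) (hPqB : P*qB ≤ Q + P) :
    S1 ≤ dR*P + 2*(dR+1)*(6*dR*X*P + 2*Q + 4*P) := by
  have hd0 : (0:ℝ) ≤ dR := by linarith
  have hP0 : (0:ℝ) < P := by linarith
  have t1 : mmA ≤ 6*dR*X + 2*Q + 4 := by linarith
  have t2 : P*mmB ≤ 6*dR*X*P + 2*Q + 4*P :=
    Mmm_bound P X dR mmB qB Q hP0 hd0 (by linarith) hmmB hPqB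
  have t3 : 6*dR*X + 2*Q + 4 ≤ 6*dR*X*P + 2*Q + 4*P := by
    nlinarith [mul_nonneg (mul_nonneg hd0 (by linarith : (0:ℝ) ≤ X)) (by linarith : (0:ℝ) ≤ P - 1)]
  have hd1 : (0:ℝ) ≤ dR + 1 := by linarith
  nlinarith [mul_le_mul_of_nonneg_left (t1.trans t3) hd1,
    mul_le_mul_of_nonneg_left t2 hd1]

/-- the value pattern: coordinate `s` of `ω` should equal coordinate `s mod d` of `v`. -/
def gnV {d : ℕ} (v : Fin d → ℕ) (s : ℕ) : ℕ :=
  if hd : 0 < d then v ⟨s % d, Nat.mod_lt _ hd⟩ else 0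

/-- the basic agreement event for family `r` at block `T`. -/
def EvF {d M L : ℕ} (v : Fin d → ℕ) (r T : ℕ) (ω : Fin L → Fin M) : Prop :=
  ∀ s ∈ famC d T r, extValsN ω s = gnV v s

lemma approachN_unique {a u s s' w : ℕ} (hw : w ≠ u) (h1 : approachN a u s = w)
    (h2 : approachN a u s' = w) : s = s' := by
  unfold approachN at h1 h2
  by_cases hau : a ≤ u <;> simp only [hau, if_true, if_false, ite_true, ite_false] at h1 h2 <;> omega

open scoped Classical in
lemma block_event {d M L : ℕ} (hd : 0 < d) (h : Fin d → ℕ) (ω : Fin L → Fin M)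
    (v : Fin d → ℕ) {k' T t : ℕ} (hk' : 1 ≤ k') (hT : d ≤ T) (htT : t / M = T)
    (hagree : ∀ j ∈ OutF d (T % d) k', gridSnake M h (extValsN ω) t j = v j) :
    ∀ s ∈ CEset d T k', extValsN ω s = gnV v s := by
  intro s hs
  rw [CEset, mem_image] at hs
  obtain ⟨j, hj, rfl⟩ := hs
  have hjne : (j : ℕ) ≠ T % d := OutF_ne_i (Nat.mod_lt _ hd) hk' j hj
  have hx : gridSnake M h (extValsN ω) t j = macroChainN h (extValsN ω) T j := by
    rw [gridSnake, htT, if_neg hjne]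
  have hmac : macroChainN h (extValsN ω) T j = extValsN ω (tauB d T (j : ℕ)) :=
    macroChainN_eq hd h (extValsN ω) j hT
  have hmod : tauB d T (j : ℕ) % d = (j : ℕ) := tauB_mod hd j.isLt hT
  have hgn : gnV v (tauB d T (j : ℕ)) = v j := by
    rw [gnV, dif_pos hd]
    congr 1
    exact Fin.ext hmod
  rw [hgn, ← hmac, ← hx]
  exact hagree j hj

set_option maxHeartbeats 2000000 in
open scoped Classical in
lemma sparse_of_good (d M L : ℕ) (hd : 3 ≤ d) (hM : 3 ≤ M) (hLM : d * M ≤ L)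
    (h : Fin d → ℕ) (ω : Fin L → Fin M)
    (hgood : ∀ v : Fin d → ℕ, (∀ i, v i < M) → ∀ r, 1 ≤ r → r ≤ d → ∀ a < d + 1,
      (((Finset.Ico d (L / M + 1)).filter
          (fun T => T % (d+1) = a ∧ EvF v r T ω)).card : ℕ)
        < 2 * d * (Nat.log 2 M + 1) + 2 * ((L / M + 1) / M ^ r) + 2) :
    IsGridSparse (100 * (d+1) : ℝ) d M L (gridSnake M h (extValsN ω)) := by
  intro v hv k hk
  have hd0 : 0 < d := by omega
  have hM0 : 0 < M := by omega
  set nB := L / M + 1 with hnB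
  set mm : ℕ → ℕ := fun r => 2 * d * (Nat.log 2 M + 1) + 2 * (nB / M ^ r) + 2 with hmm
  set x := gridSnake M h (extValsN ω) with hx
  set S := (Finset.range L).filter (fun t => delta d (x t) v ((t / M) % d) = k) with hS
  -- counting per events, via goodness
  have hEcnt : ∀ r, 1 ≤ r → r ≤ d →
      ((Ico d nB).filter (fun T => EvF v r T ω)).card ≤ (d+1) * mm r := by
    intro r hr1 hrd
    have hsub : (Ico d nB).filter (fun T => EvF v r T ω) ⊆
        (range (d+1)).biUnion (fun a => (Ico d nB).filter
          (fun T => T % (d+1) = a ∧ EvF v r T ω)) := by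
      intro T hT
      exact mem_biUnion.mpr ⟨T % (d+1), mem_range.mpr (Nat.mod_lt _ (by omega)),
        mem_filter.mpr ⟨(mem_filter.mp hT).1, rfl, (mem_filter.mp hT).2⟩⟩
    calc _ ≤ _ := card_le_card hsub
      _ ≤ ∑ a ∈ range (d+1), ((Ico d nB).filter
            (fun T => T % (d+1) = a ∧ EvF v r T ω)).card := card_biUnion_le
      _ ≤ ∑ _a ∈ range (d+1), mm r :=
          sum_le_sum (fun a ha => (hgood v hv r hr1 hrd a (mem_range.mp ha)).le)
      _ = (d+1) * mm r := by rw [sum_const, card_range, smul_eq_mul]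
  -- block decomposition
  have h3 : ∀ T, (S.filter (fun t => t / M = T)).card ≤ M := by
    intro T
    have hsub : S.filter (fun t => t / M = T) ⊆ Ico (M * T) (M * T + M) := by
      intro t ht
      have h4 := (mem_filter.mp ht).2
      have h5 := Nat.div_add_mod t M
      have h6 := Nat.mod_lt t hM0
      rw [h4] at h5
      rw [mem_Ico]
      omega
    calc _ ≤ (Ico (M*T) (M*T+M)).card := card_le_card hsub
      _ = M := by rw [Nat.card_Ico]; omega
  have hdnB : d ≤ nB := by
    have : d ≤ L / M := (Nat.le_div_iff_mul_le hM0).mpr hLM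
    omega
  have hsplit : S.card ≤ d * M + ∑ T ∈ Ico d nB, (S.filter (fun t => t / M = T)).card := by
    have hcov : S ⊆ (range nB).biUnion (fun T => S.filter (fun t => t / M = T)) := by
      intro t ht
      refine mem_biUnion.mpr ⟨t / M, mem_range.mpr ?_, mem_filter.mpr ⟨ht, rfl⟩⟩
      have htL : t < L := mem_range.mp (mem_filter.mp ht).1
      have : t / M ≤ L / M := Nat.div_le_div_right htL.le
      omega
    have h1 : S.card ≤ ∑ T ∈ range nB, (S.filter (fun t => t / M = T)).card :=
      (card_le_card hcov).trans card_biUnion_le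
    have h2 : ∑ T ∈ range nB, (S.filter (fun t => t / M = T)).card
        = ∑ T ∈ range d, (S.filter (fun t => t / M = T)).card
          + ∑ T ∈ Ico d nB, (S.filter (fun t => t / M = T)).card := by
      rw [range_eq_Ico, range_eq_Ico, ← sum_Ico_consecutive _ (Nat.zero_le d) hdnB]
    have h4 : ∑ T ∈ range d, (S.filter (fun t => t / M = T)).card ≤ d * M := by
      calc _ ≤ ∑ _T ∈ range d, M := sum_le_sum (fun T _ => h3 T)
        _ = d * M := by rw [sum_const, card_range, smul_eq_mul]
    omega
  -- real-number prerequisites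
  have hP3 : (3:ℝ) ≤ (M:ℝ) := by exact_mod_cast hM
  have hP0 : (0:ℝ) < (M:ℝ) := by linarith
  set X := Real.log M with hX
  have hX1 : (1:ℝ) ≤ X := by
    rw [hX, Real.le_log_iff_exp_le hP0]
    calc Real.exp 1 ≤ 2.7182818286 := Real.exp_one_lt_d9.le
      _ ≤ (M:ℝ) := by linarith
  have hlogM : ((Nat.log 2 M : ℕ) : ℝ) ≤ 2 * X := by
    have h1 : (2:ℕ) ^ Nat.log 2 M ≤ M := Nat.pow_log_le_self 2 (by omega)
    have h2 : ((Nat.log 2 M : ℕ) : ℝ) * Real.log 2 ≤ X := by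
      rw [hX, ← Real.log_pow]
      apply Real.log_le_log (by positivity)
      exact_mod_cast h1
    nlinarith [Real.log_two_gt_d9]
  have hlogMd : Real.log ((M:ℝ) ^ d) = d * X := by rw [Real.log_pow, hX]
  have hQ0 : (0:ℝ) ≤ (L:ℝ) / (M:ℝ) ^ (d - k) := by positivity
  have hdR : (3:ℝ) ≤ (d:ℝ) := by exact_mod_cast hd
  -- cast of mm
  have hmmR : ∀ r, ((mm r : ℕ) : ℝ) ≤ 6 * d * X + 2 * ((nB / M ^ r : ℕ) : ℝ) + 2 := by
    intro r
    have : ((mm r : ℕ) : ℝ)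
        = 2 * d * (((Nat.log 2 M : ℕ) : ℝ) + 1) + 2 * ((nB / M ^ r : ℕ) : ℝ) + 2 := by
      rw [hmm]; push_cast; ring
    rw [this]
    nlinarith [hlogM, hX1, hdR]
  -- bounds on the nat-division terms
  have hnBr : ∀ r : ℕ, ((nB / M ^ r : ℕ) : ℝ) * (M:ℝ) ^ r ≤ (L:ℝ) / (M:ℝ) + 1 := by
    intro r
    have h1 : (nB / M ^ r) * M ^ r ≤ nB := Nat.div_mul_le_self nB (M ^ r)
    have h2 : ((nB : ℕ) : ℝ) ≤ (L:ℝ) / (M:ℝ) + 1 := by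
      rw [hnB]
      push_cast
      have := Nat.cast_div_le (α := ℝ) (m := L) (n := M)
      linarith
    calc ((nB / M ^ r : ℕ) : ℝ) * (M:ℝ) ^ r = (((nB / M ^ r) * M ^ r : ℕ) : ℝ) := by push_cast; ring
      _ ≤ ((nB : ℕ) : ℝ) := by exact_mod_cast h1
      _ ≤ _ := h2
  by_cases hkd : k = d
  · -- trivial case k = d
    have hcard : (S.card : ℝ) ≤ (L : ℝ) := by
      exact_mod_cast (card_filter_le _ _).trans (card_range L).le
    have hMk : (M:ℝ) ^ (d - k) = 1 := by rw [hkd]; simp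
    rw [hlogMd, hMk, div_one]
    have hL0 : (0:ℝ) ≤ (L:ℝ) := by positivity
    have h1 : (1:ℝ) ≤ (d:ℝ) * X := by nlinarith
    have hML0 : (0:ℝ) ≤ (M:ℝ) + L := by linarith
    have h2 : (0:ℝ) ≤ (100 * ((d:ℝ)+1) * ((d:ℝ) * X) - 1) * ((M:ℝ) + L) := by
      apply mul_nonneg _ hML0
      nlinarith [h1, hdR]
    nlinarith [h2, hcard]
  · have hkd' : k < d := lt_of_le_of_ne hk hkd
    by_cases hk0 : k = 0
    · -- case k = 0
      have hfamA : ∀ T, famC d T (d-1) = CEset d T 1 := by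
        intro T; rw [famC, if_neg (by omega)]; congr 1; omega
      have hfamB : ∀ T, famC d T d = insert T (CEset d T 1) := by
        intro T; rw [famC, if_pos rfl]
      have hall : ∀ t ∈ S, ∀ j : Fin d, x t j = v j := by
        intro t ht j
        have hδ : delta d (x t) v ((t/M) % d) = k := (mem_filter.mp ht).2
        rw [hk0] at hδ
        exact delta_spec hd0 (x t) v ((t/M)%d) 0 hδ j (fun l hl => absurd hl (Nat.not_lt_zero l))
      have hblock : ∀ T ∈ Ico d nB,
          (S.filter (fun t => t / M = T)).card ≤
            (if EvF v (d-1) T ω then 1 else 0) + M * (if EvF v d T ω then 1 else 0) := by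
        intro T hT
        have hTd : d ≤ T := (mem_Ico.mp hT).1
        have hmemA : ∀ t ∈ S.filter (fun t => t / M = T), EvF v (d-1) T ω := by
          intro t ht
          have htT : t / M = T := (mem_filter.mp ht).2
          intro s hs
          rw [hfamA T] at hs
          refine block_event hd0 h ω v (le_refl 1) hTd htT ?_ s hs
          intro j _
          exact hall t (mem_filter.mp ht).1 j
        by_cases hB : EvF v d T ω
        · rw [if_pos hB, mul_one]
          have := h3 T
          omega
        · rw [if_neg hB, mul_zero, add_zero]
          by_cases hA : EvF v (d-1) T ω
          · rw [if_pos hA]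
            rw [card_le_one]
            intro t ht t' ht'
            have hne : gnV v T ≠ extValsN ω T := by
              intro hEq
              apply hB
              intro s hs
              rw [hfamB T, mem_insert] at hs
              rcases hs with rfl | hs
              · exact hEq.symm
              · have hA' := hA
                rw [EvF, hfamA T] at hA'
                exact hA' s hs
            have happ : ∀ tt ∈ S.filter (fun t => t / M = T),
                approachN (macroChainN h (extValsN ω) T ⟨T % d, Nat.mod_lt _ hd0⟩)
                  (extValsN ω T) (tt % M) = gnV v T := by
              intro tt htt
              have httT : tt / M = T := (mem_filter.mp htt).2
              have hj := hall tt (mem_filter.mp htt).1 ⟨T % d, Nat.mod_lt _ hd0⟩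
              have hxe : x tt ⟨T % d, Nat.mod_lt _ hd0⟩
                  = approachN (macroChainN h (extValsN ω) T ⟨T % d, Nat.mod_lt _ hd0⟩)
                      (extValsN ω T) (tt % M) := by
                show gridSnake M h (extValsN ω) tt _ = _
                rw [gridSnake, httT, if_pos rfl]
              rw [hxe] at hj
              rw [hj, gnV, dif_pos hd0]
            have h1 := happ t ht
            have h2 := happ t' ht'
            have hmeq : t % M = t' % M := approachN_unique hne h1 h2
            have ht1 : t / M = T := (mem_filter.mp ht).2
            have ht2 : t' / M = T := (mem_filter.mp ht').2
            have e1 := Nat.div_add_mod t M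
            have e2 := Nat.div_add_mod t' M
            rw [ht1] at e1
            rw [ht2] at e2
            omega
          · rw [if_neg hA]
            rw [Nat.le_zero, card_eq_zero]
            by_contra hne2
            obtain ⟨t, ht⟩ := nonempty_of_ne_empty hne2
            exact hA (hmemA t ht)
      have hsum : ∑ T ∈ Ico d nB, (S.filter (fun t => t / M = T)).card
          ≤ (d+1) * mm (d-1) + M * ((d+1) * mm d) := by
        calc ∑ T ∈ Ico d nB, (S.filter (fun t => t / M = T)).card
            ≤ ∑ T ∈ Ico d nB, ((if EvF v (d-1) T ω then 1 else 0)
                + M * (if EvF v d T ω then 1 else 0)) := sum_le_sum hblock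
          _ = ((Ico d nB).filter (fun T => EvF v (d-1) T ω)).card
              + M * ((Ico d nB).filter (fun T => EvF v d T ω)).card := by
              rw [sum_add_distrib, ← mul_sum, card_filter, card_filter]
          _ ≤ (d+1) * mm (d-1) + M * ((d+1) * mm d) :=
              Nat.add_le_add (hEcnt (d-1) (by omega) (by omega))
                (Nat.mul_le_mul_left M (hEcnt d (by omega) (le_refl d)))
      have hnat : S.card ≤ d * M + ((d+1) * mm (d-1) + M * ((d+1) * mm d)) := by omega
      have hcR : (S.card : ℝ) ≤ (d:ℝ)*(M:ℝ) + (((d:ℝ)+1) * ((mm (d-1) : ℕ):ℝ)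
          + (M:ℝ)*(((d:ℝ)+1) * ((mm d : ℕ):ℝ))) := by exact_mod_cast hnat
      set Q := (L:ℝ) / (M:ℝ) ^ (d - k) with hQdef
      have hdk0 : d - k = d := by omega
      have hQd : Q = (L:ℝ) / (M:ℝ) ^ d := by rw [hQdef, hdk0]
      have hMr0 : (0:ℝ) < (M:ℝ) ^ d := by positivity
      have hR1d : (1:ℝ) ≤ (M:ℝ) ^ d := one_le_pow₀ (by linarith)
      have hR1d1 : (1:ℝ) ≤ (M:ℝ) ^ (d-1) := one_le_pow₀ (by linarith)
      have hQRd : Q * (M:ℝ)^d = (L:ℝ) := by rw [hQd]; exact div_mul_cancel₀ _ (ne_of_gt hMr0)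
      have hMqB : (M:ℝ) * ((nB / M ^ d : ℕ):ℝ) ≤ Q + (M:ℝ) :=
        Mq_bound _ _ _ _ _ hP0 hR1d (by positivity) (hnBr d) hQRd
      have hQRd1 : Q * ((M:ℝ)^(d-1) * (M:ℝ)) = (L:ℝ) := by
        rw [← pow_succ, (by omega : d - 1 + 1 = d)]
        exact hQRd
      have hqA : ((nB / M ^ (d-1) : ℕ):ℝ) ≤ Q + 1 :=
        qA_bound ((M:ℝ)^(d-1)) _ Q (L:ℝ) (M:ℝ) hR1d1 hP0 (by positivity) (hnBr (d-1)) hQRd1 hQ0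
      rw [hlogMd]
      refine final_real (d:ℝ) X (M:ℝ) Q _ hdR hX1 hP3 hQ0 ?_
      exact S20_bound _ _ _ _ _ _ _ _ _ hdR hX1 hP3 hQ0 (by positivity) hcR
        (hmmR (d-1)) hqA (hmmR d) hMqB
    · -- case 1 ≤ k ≤ d - 1
      have hk1 : 1 ≤ k := by omega
      have hr1 : 1 ≤ d - k := by omega
      have hrd : d - k ≤ d := by omega
      have hrdne : d - k ≠ d := by omega
      have hfam : ∀ T, famC d T (d - k) = CEset d T k := by
        intro T
        rw [famC, if_neg hrdne]
        congr 1
        omega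
      have hblock : ∀ T ∈ Ico d nB,
          (S.filter (fun t => t / M = T)).card ≤ M * (if EvF v (d-k) T ω then 1 else 0) := by
        intro T hT
        by_cases hE : EvF v (d-k) T ω
        · rw [if_pos hE, mul_one]; exact h3 T
        · rw [if_neg hE, mul_zero, Nat.le_zero, card_eq_zero]
          by_contra hne
          obtain ⟨t, ht⟩ := nonempty_of_ne_empty hne
          have htmem := mem_filter.mp ht
          have htT : t / M = T := htmem.2
          have hδ : delta d (x t) v ((t/M) % d) = k := (mem_filter.mp htmem.1).2
          have hTd : d ≤ T := (mem_Ico.mp hT).1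
          apply hE
          intro s hs
          rw [hfam T] at hs
          refine block_event hd0 h ω v hk1 hTd htT ?_ s hs
          intro j hj
          rw [OutF, mem_filter] at hj
          refine delta_spec hd0 (x t) v ((t/M)%d) k hδ j ?_
          rw [htT]
          exact hj.2
      have hsum : ∑ T ∈ Ico d nB, (S.filter (fun t => t / M = T)).card
          ≤ M * ((d+1) * mm (d-k)) := by
        calc ∑ T ∈ Ico d nB, (S.filter (fun t => t / M = T)).card
            ≤ ∑ T ∈ Ico d nB, M * (if EvF v (d-k) T ω then 1 else 0) := sum_le_sum hblock
          _ = M * ∑ T ∈ Ico d nB, (if EvF v (d-k) T ω then 1 else 0) := by rw [mul_sum]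
          _ = M * ((Ico d nB).filter (fun T => EvF v (d-k) T ω)).card := by rw [card_filter]
          _ ≤ M * ((d+1) * mm (d-k)) := Nat.mul_le_mul_left M (hEcnt (d-k) hr1 hrd)
      have hnat : S.card ≤ d * M + M * ((d+1) * mm (d-k)) := by omega
      have hcR : (S.card : ℝ) ≤ (d:ℝ) * M + (M:ℝ) * (((d:ℝ)+1) * ((mm (d-k) : ℕ):ℝ)) := by
        exact_mod_cast hnat
      set Q := (L:ℝ) / (M:ℝ) ^ (d - k) with hQdef
      set qr := ((nB / M ^ (d-k) : ℕ) : ℝ) with hqrdef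
      have hqr0 : (0:ℝ) ≤ qr := by positivity
      have hMr0 : (0:ℝ) < (M:ℝ) ^ (d-k) := by positivity
      have hR1 : (1:ℝ) ≤ (M:ℝ) ^ (d-k) := one_le_pow₀ (by linarith)
      have hQR : Q * (M:ℝ) ^ (d-k) = (L:ℝ) := by
        rw [hQdef]; exact div_mul_cancel₀ _ (ne_of_gt hMr0)
      have hLM' : (M:ℝ) * ((L:ℝ)/(M:ℝ) + 1) = (L:ℝ) + M := by
        rw [mul_add, mul_one, mul_div_cancel₀ _ (ne_of_gt hP0)]
      have hMMr : (M:ℝ) ≤ (M:ℝ) * (M:ℝ)^(d-k) := le_mul_of_one_le_right hP0.le hR1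
      have hMq : (M:ℝ) * qr ≤ Q + (M:ℝ) :=
        Mq_bound _ _ _ _ _ hP0 hR1 hqr0 (hnBr (d-k)) hQR
      have hMmm : (M:ℝ) * ((mm (d-k) : ℕ):ℝ) ≤ 6*(d:ℝ)*X*(M:ℝ) + 2*Q + 4*(M:ℝ) :=
        Mmm_bound _ _ _ _ _ _ hP0 (by positivity) (by linarith) (hmmR (d-k)) hMq
      have hS2 : (S.card : ℝ) ≤ (d:ℝ)*(M:ℝ) + 2*((d:ℝ)+1)*(6*(d:ℝ)*X*(M:ℝ) + 2*Q + 4*(M:ℝ)) :=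
        S2_bound _ _ _ _ _ (by positivity) (by positivity) hcR hMmm
      rw [hlogMd]
      exact final_real (d:ℝ) X (M:ℝ) Q _ hdR hX1 hP3 hQ0 hS2

open scoped Classical in
theorem stmt_13' (d : ℕ) (hd : 3 ≤ d) :
    ∃ c > (0 : ℝ), ∀ ε > (0 : ℝ), ∃ M₀ : ℕ, ∀ M : ℕ, M₀ ≤ M →
      ∀ h : Fin d → ℕ, (∀ i, h i < M) →
        ∀ L : ℕ, L = ⌊Real.sqrt ((M : ℝ) ^ d) / 100⌋₊ →
          1 - ε ≤ unifPr (fun ω : Fin L → Fin M =>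
            IsGridSparse c d M L (gridSnake M h (extValsN ω))) := by
  refine ⟨(100 * (d+1) : ℝ), by positivity, ?_⟩
  intro ε hε
  refine ⟨(101*d)^2 + ⌈((d:ℝ)*((d:ℝ)+1))/ε⌉₊ + 3, ?_⟩
  intro M hM h hh L hL
  have hd0 : 0 < d := by omega
  have hM3 : 3 ≤ M := by omega
  have hM2 : 2 ≤ M := by omega
  have hM0 : 0 < M := by omega
  have hMbig : (101*d)^2 ≤ M := by omega
  have hP0 : (0:ℝ) < (M:ℝ) := by exact_mod_cast hM0
  have hP1 : (1:ℝ) ≤ (M:ℝ) := by exact_mod_cast hM0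
  -- L is large : d * M ≤ L
  have hLM : d * M ≤ L := by
    rw [hL]
    apply Nat.le_floor
    rw [le_div_iff₀ (by norm_num : (0:ℝ) < 100)]
    push_cast
    have hsq : ((d:ℝ) * M * 100) ^ 2 ≤ (M:ℝ) ^ d := by
      have h1 : ((d:ℝ) * M * 100) ^ 2 = 10000 * (d:ℝ)^2 * (M:ℝ)^2 := by ring
      have h2 : (10000 * (d:ℝ)^2) * (M:ℝ)^2 ≤ (M:ℝ) * (M:ℝ)^2 := by
        apply mul_le_mul_of_nonneg_right _ (by positivity)
        have : ((101*d)^2 : ℝ) ≤ (M:ℝ) := by exact_mod_cast hMbig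
        nlinarith [this, (by exact_mod_cast hd : (3:ℝ) ≤ (d:ℝ))]
      have h3 : (M:ℝ) * (M:ℝ)^2 = (M:ℝ)^3 := by ring
      have h4 : (M:ℝ)^3 ≤ (M:ℝ)^d := pow_le_pow_right₀ hP1 hd
      linarith
    have := Real.sqrt_le_sqrt hsq
    rw [Real.sqrt_sq (by positivity)] at this
    linarith
  have hL0 : 0 < L := by nlinarith
  set nB := L / M + 1 with hnB
  set mm : ℕ → ℕ := fun r => 2 * d * (Nat.log 2 M + 1) + 2 * (nB / M ^ r) + 2 with hmm
  set P : (Fin L → Fin M) → Prop :=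
    fun ω => IsGridSparse (100 * (d+1) : ℝ) d M L (gridSnake M h (extValsN ω)) with hPdef
  set V : Finset (Fin d → ℕ) := Fintype.piFinset (fun _ : Fin d => range M) with hV
  set badF : (Fin d → ℕ) → ℕ → ℕ → Finset (Fin L → Fin M) := fun v r a =>
    univ.filter (fun ω => mm r ≤
      ((Ico d nB).filter (fun T => T % (d+1) = a ∧ EvF v r T ω)).card) with hbadF
  -- each bad set is small
  have hbadcard : ∀ v r a, 1 ≤ r → r ≤ d →
      ((badF v r a).card : ℝ) ≤ (M:ℝ)^L / (M:ℝ)^(2*d) := by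
    intro v r a hr1 hrd
    set ι : Finset ℕ := (Ico d nB).filter (fun T => T % (d+1) = a) with hι
    have hfe : ∀ ω : Fin L → Fin M,
        (Ico d nB).filter (fun T => T % (d+1) = a ∧ EvF v r T ω)
          = ι.filter (fun T => ∀ s ∈ famC d T r, extValsN ω s = gnV v s) := by
      intro ω
      rw [hι, filter_filter]
      apply filter_congr
      intro T _
      constructor
      · rintro ⟨h1, h2⟩; exact ⟨h1, h2⟩
      · rintro ⟨h1, h2⟩; exact ⟨h1, h2⟩
    have hcards : ι.card ≤ nB := by
      calc ι.card ≤ (Ico d nB).card := card_filter_le _ _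
        _ = nB - d := Nat.card_Ico _ _
        _ ≤ nB := Nat.sub_le _ _
    have hTmem : ∀ T ∈ ι, d ≤ T ∧ T < nB := by
      intro T hT
      have := mem_Ico.mp (mem_filter.mp hT).1
      omega
    have hCL : ∀ T ∈ ι, ∀ s ∈ famC d T r, s < L := by
      intro T hT s hs
      obtain ⟨h1, h2⟩ := hTmem T hT
      have h4 := (famC_mem hd0 (by omega) hs).2
      have h5 : L / M < L := Nat.div_lt_self hL0 (by omega)
      omega
    have hCr : ∀ T ∈ ι, r ≤ (famC d T r).card := by
      intro T hT
      exact famC_card hd0 (hTmem T hT).1 hr1 hrd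
    have hdisj : ∀ T ∈ ι, ∀ T' ∈ ι, T ≠ T' →
        Disjoint (famC d T r) (famC d T' r) := by
      intro T hT T' hT' hne
      obtain ⟨hTd, _⟩ := hTmem T hT
      obtain ⟨hTd', _⟩ := hTmem T' hT'
      have ha1 : T % (d+1) = a := (mem_filter.mp hT).2
      have ha2 : T' % (d+1) = a := (mem_filter.mp hT').2
      rw [disjoint_left]
      intro s hs hs'
      have h1 := famC_mem hd0 (by omega) hs
      have h2 := famC_mem hd0 (by omega) hs'
      have hmod : T % (d+1) = T' % (d+1) := by rw [ha1, ha2]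
      rcases Nat.lt_or_ge T T' with hlt | hge
      · have hdvd : (d+1) ∣ T' - T := (Nat.modEq_iff_dvd' hlt.le).mp hmod
        have := Nat.le_of_dvd (by omega) hdvd
        omega
      · have hlt' : T' < T := by omega
        have hdvd : (d+1) ∣ T - T' := (Nat.modEq_iff_dvd' hlt'.le).mp hmod.symm
        have := Nat.le_of_dvd (by omega) hdvd
        omega
    have hcb := class_card_bound L M d hM2 nB ι hcards (fun T => famC d T r) (gnV v) r hCL hCr hdisj
    have hfeq : badF v r a = univ.filter (fun ω : Fin L → Fin M =>
        2 * d * (Nat.log 2 M + 1) + 2 * (nB / M ^ r) + 2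
          ≤ (ι.filter (fun T => ∀ s ∈ famC d T r, extValsN ω s = gnV v s)).card) := by
      rw [hbadF]
      apply filter_congr
      intro ω _
      rw [hfe ω]
    rw [hfeq]
    exact hcb
  -- failure of sparseness implies membership in some bad set
  have hcover : univ.filter (fun ω => ¬ P ω) ⊆
      V.biUnion (fun v => (Icc 1 d).biUnion (fun r => (range (d+1)).biUnion
        (fun a => badF v r a))) := by
    intro ω hω
    have hnP : ¬ P ω := (mem_filter.mp hω).2
    have hcontra : ¬ (∀ v : Fin d → ℕ, (∀ i, v i < M) → ∀ r, 1 ≤ r → r ≤ d → ∀ a < d + 1,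
        (((Ico d nB).filter (fun T => T % (d+1) = a ∧ EvF v r T ω)).card : ℕ) < mm r) := by
      intro hgood
      exact hnP (sparse_of_good d M L hd hM3 hLM h ω hgood)
    push_neg at hcontra
    obtain ⟨v, hv, r, hr1, hrd, a, ha, hbig⟩ := hcontra
    refine mem_biUnion.mpr ⟨v, ?_, mem_biUnion.mpr ⟨r, mem_Icc.mpr ⟨hr1, hrd⟩,
      mem_biUnion.mpr ⟨a, mem_range.mpr ha, ?_⟩⟩⟩
    · rw [hV, Fintype.mem_piFinset]
      intro i
      exact mem_range.mpr (hv i)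
    · rw [hbadF]
      exact mem_filter.mpr ⟨mem_univ _, hbig⟩
  -- count
  have hVcard : V.card = M ^ d := by
    rw [hV, Fintype.card_piFinset]
    simp [card_range]
  have hbig : ((univ.filter (fun ω => ¬ P ω)).card : ℝ)
      ≤ (M:ℝ)^d * ((d:ℝ) * ((d:ℝ)+1)) * ((M:ℝ)^L / (M:ℝ)^(2*d)) := by
    have h1 : (univ.filter (fun ω => ¬ P ω)).card
        ≤ ∑ v ∈ V, ∑ r ∈ Icc 1 d, ∑ a ∈ range (d+1), (badF v r a).card := by
      calc _ ≤ _ := card_le_card hcover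
        _ ≤ ∑ v ∈ V, ((Icc 1 d).biUnion (fun r => (range (d+1)).biUnion
              (fun a => badF v r a))).card := card_biUnion_le
        _ ≤ _ := by
            apply sum_le_sum
            intro v _
            calc _ ≤ _ := card_biUnion_le
              _ ≤ _ := sum_le_sum (fun r _ => card_biUnion_le)
    have h2 : ((univ.filter (fun ω => ¬ P ω)).card : ℝ)
        ≤ ∑ v ∈ V, ∑ r ∈ Icc 1 d, ∑ a ∈ range (d+1), ((badF v r a).card : ℝ) := by
      exact_mod_cast h1
    have h3 : ∑ v ∈ V, ∑ r ∈ Icc 1 d, ∑ a ∈ range (d+1), ((badF v r a).card : ℝ)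
        ≤ ∑ v ∈ V, ∑ r ∈ Icc 1 d, ∑ a ∈ range (d+1), ((M:ℝ)^L / (M:ℝ)^(2*d)) := by
      apply sum_le_sum; intro v _
      apply sum_le_sum; intro r hr
      apply sum_le_sum; intro a _
      exact hbadcard v r a (mem_Icc.mp hr).1 (mem_Icc.mp hr).2
    have h4 : ∑ v ∈ V, ∑ r ∈ Icc 1 d, ∑ a ∈ range (d+1), ((M:ℝ)^L / (M:ℝ)^(2*d))
        = (M:ℝ)^d * ((d:ℝ) * ((d:ℝ)+1)) * ((M:ℝ)^L / (M:ℝ)^(2*d)) := by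
      rw [sum_const, sum_const, sum_const, card_range, Nat.card_Icc, hVcard]
      simp only [smul_eq_mul, nsmul_eq_mul]
      push_cast
      ring
    linarith
  -- ε bound
  have hεM : (d:ℝ) * ((d:ℝ)+1) ≤ ε * (M:ℝ)^d := by
    have h1 : ⌈((d:ℝ)*((d:ℝ)+1))/ε⌉₊ ≤ M := by omega
    have h2 : ((d:ℝ)*((d:ℝ)+1))/ε ≤ (M:ℝ) := by
      exact_mod_cast Nat.ceil_le.mp h1
    have h3 : (d:ℝ)*((d:ℝ)+1) ≤ ε * (M:ℝ) := by
      rw [div_le_iff₀ hε] at h2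
      linarith
    have h4 : (M:ℝ) ≤ (M:ℝ)^d := le_self_pow₀ hP1 (by omega)
    nlinarith
  have hfinal : ((univ.filter (fun ω => ¬ P ω)).card : ℝ) ≤ ε * (M:ℝ)^L := by
    have heq : (M:ℝ)^d * ((d:ℝ) * ((d:ℝ)+1)) * ((M:ℝ)^L / (M:ℝ)^(2*d))
        = ((d:ℝ) * ((d:ℝ)+1)) * ((M:ℝ)^L / (M:ℝ)^d) := by
      have : (M:ℝ)^(2*d) = (M:ℝ)^d * (M:ℝ)^d := by rw [two_mul, pow_add]
      field_simp [this]
      ring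
    rw [heq] at hbig
    have hMd0 : (0:ℝ) < (M:ℝ)^d := by positivity
    have : ((d:ℝ) * ((d:ℝ)+1)) * ((M:ℝ)^L / (M:ℝ)^d) ≤ ε * (M:ℝ)^L := by
      rw [div_eq_mul_inv]
      have hinv : (0:ℝ) ≤ ((M:ℝ)^d)⁻¹ := by positivity
      have hh := mul_le_mul_of_nonneg_right hεM (mul_nonneg (by positivity : (0:ℝ) ≤ (M:ℝ)^L) hinv)
      calc ((d:ℝ) * ((d:ℝ)+1)) * ((M:ℝ)^L * ((M:ℝ)^d)⁻¹)
          ≤ ε * (M:ℝ)^d * ((M:ℝ)^L * ((M:ℝ)^d)⁻¹) := by linarith [hh]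
        _ = ε * (M:ℝ)^L := by field_simp
    linarith
  -- assemble
  rw [unifPr]
  have hcΩ : (Fintype.card (Fin L → Fin M) : ℝ) = (M:ℝ)^L := by
    rw [Fintype.card_fun, Fintype.card_fin, Fintype.card_fin]
    push_cast
    ring
  have hNc : (Nat.card {ω : Fin L → Fin M // P ω} : ℝ) = ((univ.filter P).card : ℝ) := by
    rw [Nat.card_eq_fintype_card, Fintype.card_subtype]
  rw [hcΩ, hNc]
  have hsplit : (univ.filter P).card + (univ.filter (fun ω => ¬ P ω)).card = M ^ L := by
    rw [card_filter_add_card_filter_not, card_univ, Fintype.card_fun,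
      Fintype.card_fin, Fintype.card_fin]
  have hMLpos : (0:ℝ) < (M:ℝ)^L := by positivity
  rw [le_div_iff₀ hMLpos]
  have hsplitR : ((univ.filter P).card : ℝ) = (M:ℝ)^L - ((univ.filter (fun ω => ¬ P ω)).card : ℝ) := by
    have : (((univ.filter P).card : ℕ) : ℝ) + (((univ.filter (fun ω => ¬ P ω)).card : ℕ) : ℝ)
        = ((M ^ L : ℕ) : ℝ) := by exact_mod_cast hsplit
    push_cast at this
    linarith
  rw [hsplitR]
  nlinarith [hfinal, hMLpos]

/-- **Almost all grid snakes are sparse.** Fix `d ≥ 3`. There is a constant `c > 0`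
(depending only on `d`) such that, as `N = M^d → ∞`, with `L = ⌊√N/100⌋`, for every
start vertex `h`, a snake drawn from the grid snake distribution `D_{h,L}` on
`{0,…,M-1}^d` is `c`-sparse with probability `1 - o(1)`. -/
theorem stmt_13 (d : ℕ) (hd : 3 ≤ d) :
    ∃ c > (0 : ℝ), ∀ ε > (0 : ℝ), ∃ M₀ : ℕ, ∀ M : ℕ, M₀ ≤ M →
      ∀ h : Fin d → ℕ, (∀ i, h i < M) →
        ∀ L : ℕ, L = ⌊Real.sqrt ((M : ℝ) ^ d) / 100⌋₊ →
          1 - ε ≤ unifPr (fun ω : Fin L → Fin M =>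
            IsGridSparse c d M L (gridSnake M h (extValsN ω))) :=
  stmt_13' d hd
end

section
/- Fix an integer d ≥ 3. For every c > 0 there exists c' > 0 (depending only on c and d) such that the following holds for all sufficiently large d-th powers N, with M = N^{1/d} and L = ⌊√N/100⌋. Let X = (x_0,…,x_{L−1}) be a sequence in the support of the grid snake distribution D_{h,L} on {1,…,M}^d that is c-sparse. Draw j uniformly from {0,…,L−1} and let Y be obtained from X by flicking the tail at j. Then for every vertex v, Pr_{j,Y}[v ∈ Y[j]] ≤ c'·(N^{1/d}·log N)/L. -/
/-- One unit step from `a` toward `u`, stalling at `u`. -/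
def stepToward (a u : ℕ) : ℕ :=
  if a < u then a + 1 else if u < a then a - 1 else a

/-- Regrow a grid snake tail backwards from `start` (the vertex at time `j`): after
`k` backward steps we are at time `j - k`; the backward move producing the vertex at
time `t` moves coordinate `⌊t/M⌋ mod d` one unit toward the fresh target `w ⌊t/M⌋`,
stalling once it is reached. -/
def gridFlickAux {d : ℕ} (M : ℕ) (start : Fin d → ℕ) (j : ℕ) (w : ℕ → ℕ) :
    ℕ → (Fin d → ℕ)
  | 0 => start
  | k + 1 => fun i =>
      if (i : ℕ) = ((j - (k + 1)) / M) % d then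
        stepToward (gridFlickAux M start j w k i) (w ((j - (k + 1)) / M))
      else gridFlickAux M start j w k i

/-- The grid snake obtained from `x` by flicking the tail at `j` with fresh targets
`w` (one per macro-block): `y t = x t` for `t ≥ j`, and for `t < j` the tail is
regrown backwards from `x j`. -/
def gridFlick {d : ℕ} (M : ℕ) (x : ℕ → Fin d → ℕ) (j : ℕ) (w : ℕ → ℕ) (t : ℕ) :
    Fin d → ℕ :=
  if j ≤ t then x t else gridFlickAux M (x j) j w (j - t)

section Helpers

theorem approachN_zero (a u : ℕ) : approachN a u 0 = a := by
  simp [approachN]; split <;> omega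

theorem approachN_lt {M a u : ℕ} (s : ℕ) (ha : a < M) (hu : u < M) : approachN a u s < M := by
  simp only [approachN]; split <;> omega

theorem stepToward_lt {M a u : ℕ} (ha : a < M) (hu : u < M) : stepToward a u < M := by
  simp only [stepToward]; split <;> [omega; split <;> omega]

theorem stepToward_approachN (a u s : ℕ) :
    stepToward (approachN a u s) u = approachN a u (s + 1) := by
  simp only [approachN, stepToward, min_def, max_def]
  split_ifs <;> omega

theorem approachN_full {M a u : ℕ} (ha : a < M) (hu : u < M) : approachN a u M = u := by
  simp only [approachN]; split <;> omega

theorem gridFlickAux_lt {d M : ℕ} {start : Fin d → ℕ} {j : ℕ} {w : ℕ → ℕ}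
    (hs : ∀ i, start i < M) (hw : ∀ T, w T < M) : ∀ k i, gridFlickAux M start j w k i < M := by
  intro k
  induction k with
  | zero => exact hs
  | succ k ih =>
    intro i
    simp only [gridFlickAux]
    split
    · exact stepToward_lt (ih i) (hw _)
    · exact ih i

theorem gridFlickAux_add {d : ℕ} (M : ℕ) (start : Fin d → ℕ) (j : ℕ) (w : ℕ → ℕ)
    (k m : ℕ) :
    gridFlickAux M start j w (k + m) =
      gridFlickAux M (gridFlickAux M start j w k) (j - k) w m := by
  induction m with
  | zero => rfl
  | succ m ih =>
    funext i
    show gridFlickAux M start j w (k + m + 1) i = _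
    simp only [gridFlickAux, ih, Nat.sub_sub, Nat.add_assoc]

theorem gridFlickAux_untouched {d M : ℕ} (start : Fin d → ℕ) (j : ℕ) (w : ℕ → ℕ)
    (k : ℕ) (hk : k ≤ j) (i : Fin d)
    (h : ∀ t', j - k ≤ t' → t' < j → (t' / M) % d ≠ (i : ℕ)) :
    gridFlickAux M start j w k i = start i := by
  induction k with
  | zero => rfl
  | succ k ih =>
    simp only [gridFlickAux]
    rw [if_neg, ih (by omega) (fun t' h1 h2 => h t' (by omega) h2)]
    exact fun hc => h (j - (k+1)) le_rfl (by omega) hc.symm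

theorem gridFlickAux_block {d M : ℕ} (start : Fin d → ℕ) (j : ℕ) (w : ℕ → ℕ)
    (k B : ℕ) (hk : k ≤ j) (i : Fin d) (hi : (i : ℕ) = B % d)
    (h : ∀ t', j - k ≤ t' → t' < j → t' / M = B) :
    gridFlickAux M start j w k i = approachN (start i) (w B) k := by
  induction k with
  | zero => exact (approachN_zero _ _).symm
  | succ k ih =>
    have ht' : (j - (k+1)) / M = B := h _ le_rfl (by omega)
    simp only [gridFlickAux]
    rw [if_pos (by rw [ht', hi]), ht',
      ih (by omega) (fun t' h1 h2 => h t' (by omega) h2), stepToward_approachN]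

end Helpers

section Helpers2

theorem gridFlickAux_pin {d M : ℕ} (start : Fin d → ℕ) (j : ℕ) (w : ℕ → ℕ)
    (k B : ℕ) (i : Fin d) (hM : 0 < M) (hk : k ≤ j) (hiB : (i : ℕ) = B % d)
    (htB : j - k ≤ B * M) (hBj : (B + 1) * M ≤ j)
    (hunt : ∀ t', j - k ≤ t' → t' < B * M → (t' / M) % d ≠ (i : ℕ))
    (hs : ∀ i', start i' < M) (hw : ∀ T, w T < M) :
    gridFlickAux M start j w k i = w B := by
  have hmul : (B + 1) * M = B * M + M := by ring
  have h1 : (j - (B + 1) * M) + M + (B * M - (j - k)) = k := by omega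
  rw [← h1, gridFlickAux_add, gridFlickAux_add]
  have hj3 : j - (j - (B + 1) * M) = (B + 1) * M := by omega
  have hj4 : j - (j - (B + 1) * M + M) = B * M := by omega
  rw [hj3, hj4]
  set s1 := gridFlickAux M start j w (j - (B + 1) * M) with hs1
  have hs1lt : ∀ i', s1 i' < M := fun i' => gridFlickAux_lt hs hw _ i'
  have hmid : gridFlickAux M s1 ((B + 1) * M) w M i = w B := by
    rw [gridFlickAux_block s1 _ w M B (by omega) i hiB
      (fun t' h1 h2 => by
        have : B * M ≤ t' := by omega
        exact Nat.div_eq_of_lt_le this (by omega))]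
    exact approachN_full (hs1lt i) (hw B)
  rw [gridFlickAux_untouched _ _ _ _ (by omega) i
    (fun t' h1 h2 => hunt t' (by omega) h2), hmid]

theorem mod_ne_helper {d : ℕ} (B0 q r : ℕ) (hq : q < r) (hr : r < d) :
    (B0 + q) % d ≠ (B0 + r) % d := by
  intro hEq
  have h1 : (B0 + q) % d = ((B0 + q) + (r - q)) % d := by
    rw [show (B0 + q) + (r - q) = B0 + r by omega]; exact hEq
  have hdvd : d ∣ ((B0 + q) + (r - q)) - (B0 + q) :=
    (Nat.modEq_iff_dvd' (Nat.le_add_right _ _)).mp h1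
  rw [Nat.add_sub_cancel_left] at hdvd
  have := Nat.le_of_dvd (by omega) hdvd
  omega

theorem mod_shift {a l dd : ℕ} (hl : l ≤ a) (hld : l ≤ dd) (hdd : 0 < dd) :
    (a - l) % dd = (a % dd + dd - l) % dd := by
  calc (a - l) % dd = (a - l + dd) % dd := (Nat.add_mod_right _ _).symm
  _ = (a + (dd - l)) % dd := by rw [show a - l + dd = a + (dd - l) by omega]
  _ = (a % dd + (dd - l)) % dd := by rw [Nat.mod_add_mod]
  _ = (a % dd + dd - l) % dd := by rw [show a % dd + (dd - l) = a % dd + dd - l by omega]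

theorem macroChainN_lt {d M : ℕ} {h : Fin d → ℕ} {u : ℕ → ℕ}
    (hh : ∀ i, h i < M) (hu : ∀ T, u T < M) : ∀ T i, macroChainN h u T i < M := by
  intro T
  induction T with
  | zero => exact hh
  | succ T ih =>
    intro i
    simp only [macroChainN]
    split
    · exact hu T
    · exact ih i

theorem gridSnake_lt {d M : ℕ} {h : Fin d → ℕ} {u : ℕ → ℕ}
    (hh : ∀ i, h i < M) (hu : ∀ T, u T < M) (t : ℕ) (i : Fin d) :
    gridSnake M h u t i < M := by
  simp only [gridSnake]
  split
  · exact approachN_lt _ (macroChainN_lt hh hu _ i) (hu _)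
  · exact macroChainN_lt hh hu _ i

theorem delta_le' {α : Type*} {d : ℕ} (x v : Fin d → α) (i r : ℕ)
    (h : ∀ jj : Fin d, (∀ l, l < r → (jj : ℕ) ≠ (i + d - l) % d) → x jj = v jj) :
    delta d x v i ≤ r :=
  Nat.sInf_le h

end Helpers2

section Counting

open Finset

theorem count_pin {L M : ℕ} (S : Finset ℕ) (hS : ∀ T ∈ S, T < L) (cval : ℕ → ℕ) :
    ((Finset.univ.filter
        (fun ω : Fin L → Fin M => ∀ T ∈ S, extValsN ω T = cval T)).card) * M ^ S.card
      ≤ M ^ L := by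
  classical
  set S' : Finset (Fin L) := S.attachFin hS with hS'
  set fs := Finset.univ.filter
      (fun ω : Fin L → Fin M => ∀ T ∈ S, extValsN ω T = cval T) with hfs
  have key : Fintype.card (↥fs × (↥S' → Fin M)) ≤ Fintype.card (Fin L → Fin M) := by
    apply Fintype.card_le_of_injective
      (fun p => fun T => if h : T ∈ S' then p.2 ⟨T, h⟩ else p.1.1 T)
    rintro ⟨⟨ω1, hω1⟩, f1⟩ ⟨⟨ω2, hω2⟩, f2⟩ hpq
    simp only [Prod.mk.injEq, Subtype.mk.injEq]
    have hval : ∀ (ω : Fin L → Fin M), ω ∈ fs → ∀ T : Fin L, T ∈ S' →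
        ((ω T : ℕ)) = cval (T : ℕ) := by
      intro ω hω T hT
      rw [hfs, Finset.mem_filter] at hω
      have hTS : (T : ℕ) ∈ S := by
        rwa [hS', Finset.mem_attachFin] at hT
      have := hω.2 _ hTS
      rwa [extValsN, dif_pos T.isLt, Fin.eta] at this
    constructor
    · funext T
      by_cases hT : T ∈ S'
      · have h1 := hval ω1 hω1 T hT
        have h2 := hval ω2 hω2 T hT
        exact Fin.val_injective (h1.trans h2.symm)
      · have := congrFun hpq T
        simpa [dif_neg hT] using this
    · funext T
      have := congrFun hpq T.1
      simpa [dif_pos T.2] using this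
  have hc1 : Fintype.card (↥fs × (↥S' → Fin M)) = fs.card * M ^ S.card := by
    rw [Fintype.card_prod, Fintype.card_coe, Fintype.card_fun, Fintype.card_coe,
      Fintype.card_fin, hS', Finset.card_attachFin]
  rwa [hc1, Fintype.card_fun, Fintype.card_fin, Fintype.card_fin] at key

theorem card_filter_prod {α β : Type*} [Fintype α] [Fintype β] [DecidableEq α] [DecidableEq β]
    (P : α × β → Prop) [DecidablePred P] :
    (Finset.univ.filter P).card = ∑ a : α, (Finset.univ.filter (fun b => P (a, b))).card := by
  rw [Finset.card_eq_sum_card_fiberwise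
    (f := Prod.fst) (t := Finset.univ) (fun x _ => Finset.mem_univ _)]
  refine Finset.sum_congr rfl fun a _ => ?_
  have he : (Finset.univ.filter P).filter (fun x => x.1 = a)
      = (Finset.univ.filter (fun b => P (a, b))).image (fun b => (a, b)) := by
    ext ⟨a', b⟩
    simp only [Finset.mem_filter, Finset.mem_univ, true_and, Finset.mem_image]
    constructor
    · rintro ⟨hP, rfl⟩; exact ⟨b, hP, rfl⟩
    · rintro ⟨b', hb', heq⟩
      obtain ⟨h1, h2⟩ := Prod.mk.injEq .. ▸ heq
      exact ⟨by rw [← h1, ← h2]; exact hb', h1.symm⟩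
  rw [he, Finset.card_image_of_injective _ (fun b1 b2 hb => by
    simpa using congrArg Prod.snd hb)]

theorem card_filter_fin {L : ℕ} (Q : ℕ → Prop) [DecidablePred Q] :
    (Finset.univ.filter (fun j : Fin L => Q (j : ℕ))).card
      = ((Finset.range L).filter Q).card := by
  rw [← Finset.card_image_of_injective _ Fin.val_injective]
  congr 1
  ext n
  simp only [Finset.mem_image, Finset.mem_filter, Finset.mem_univ, true_and, Finset.mem_range]
  constructor
  · rintro ⟨j, hQ, rfl⟩; exact ⟨j.isLt, hQ⟩
  · rintro ⟨hn, hQ⟩; exact ⟨⟨n, hn⟩, hQ, rfl⟩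

end Counting

section Events

/-- Deep event: the `d-1` fresh block values starting after block `B` are pinned. -/
def deepEv (d M L : ℕ) (hd0 : 0 < d) (v : Fin d → ℕ) (B : ℕ) (ω : Fin L → Fin M) : Prop :=
  ∀ r ∈ Finset.Ico 1 d, extValsN ω (B + r) = v ⟨(B + r) % d, Nat.mod_lt _ hd0⟩

/-- Shallow event at depth `r`. -/
def shEv (d M L : ℕ) (hd0 : 0 < d) (x : ℕ → Fin d → ℕ) (v : Fin d → ℕ)
    (r jn : ℕ) (ω : Fin L → Fin M) : Prop :=
  r ≤ jn / M ∧ delta d (x jn) v ((jn / M) % d) ≤ r + 1 ∧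
    ∀ s ∈ Finset.Ico 1 r, extValsN ω (jn / M - s) = v ⟨(jn / M - s) % d, Nat.mod_lt _ hd0⟩

theorem extValsN_lt {L M : ℕ} (hM0 : 0 < M) (ω : Fin L → Fin M) (T : ℕ) :
    extValsN ω T < M := by
  unfold extValsN
  split
  · exact (ω _).isLt
  · exact hM0

theorem cover_lemma {d M L : ℕ} (hd0 : 0 < d) (hM0 : 0 < M)
    (x : ℕ → Fin d → ℕ) (v : Fin d → ℕ)
    (j : Fin L) (ω : Fin L → Fin M) (hxj : ∀ i, x (j : ℕ) i < M)
    (hhit : ∃ t ≤ (j : ℕ), gridFlick M x (j : ℕ) (extValsN ω) t = v) :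
    (∃ B, B + d ≤ (j : ℕ) / M ∧ deepEv d M L hd0 v B ω) ∨
      (∃ r < d, shEv d M L hd0 x v r (j : ℕ) ω) := by
  obtain ⟨t, htj, hit⟩ := hhit
  set jn := (j : ℕ) with hjn
  have hwlt : ∀ T, extValsN ω T < M := extValsN_lt hM0 ω
  by_cases htj' : jn ≤ t
  · -- the hit happens at time j itself
    right
    have ht : t = jn := le_antisymm htj htj'
    have hxv : x jn = v := by
      rw [gridFlick, if_pos htj', ht] at hit; exact hit
    refine ⟨0, hd0, Nat.zero_le _, ?_, by simp⟩
    exact le_trans (delta_le' _ _ _ 0 (fun jj _ => by rw [hxv])) (by omega)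
  · push_neg at htj'
    have hflick : gridFlickAux M (x jn) jn (extValsN ω) (jn - t) = v := by
      rw [gridFlick, if_neg (show ¬ jn ≤ t by omega)] at hit; exact hit
    have hkj : jn - t ≤ jn := Nat.sub_le _ _
    have hB0Bj : t / M ≤ jn / M := Nat.div_le_div_right (le_of_lt htj')
    have hBjM : jn / M * M ≤ jn := Nat.div_mul_le_self jn M
    have htB0 : t < (t / M + 1) * M := by
      have e1 : M * (t / M) + t % M = t := Nat.div_add_mod t M
      have e2 : t % M < M := Nat.mod_lt t hM0
      have e3 : (t / M + 1) * M = M * (t / M) + M := by ring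
      omega
    by_cases hdeep : t / M + d ≤ jn / M
    · -- deep case
      left
      refine ⟨t / M, hdeep, ?_⟩
      intro r hr
      rw [Finset.mem_Ico] at hr
      have hmul1 : (t / M + 1) * M ≤ (t / M + r) * M := Nat.mul_le_mul_right M (by omega)
      have hmul2 : (t / M + r + 1) * M ≤ jn / M * M := Nat.mul_le_mul_right M (by omega)
      have hpin : gridFlickAux M (x jn) jn (extValsN ω) (jn - t)
          ⟨(t / M + r) % d, Nat.mod_lt _ hd0⟩ = extValsN ω (t / M + r) := by
        apply gridFlickAux_pin (x jn) jn (extValsN ω) (jn - t) (t / M + r) _ hM0 hkj rfl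
          (by omega) (by omega) ?_ hxj hwlt
        intro t' h1 h2
        have hq1 : t / M ≤ t' / M := Nat.div_le_div_right (by omega)
        have hq2 : t' / M < t / M + r := by
          by_contra hcon
          push_neg at hcon
          have h3 : (t / M + r) * M ≤ t' / M * M := Nat.mul_le_mul_right M hcon
          have h4 : t' / M * M ≤ t' := Nat.div_mul_le_self t' M
          omega
        have hne := mod_ne_helper (t / M) (t' / M - t / M) r (by omega) hr.2
        rw [show t / M + (t' / M - t / M) = t' / M by omega] at hne
        exact hne
      have hcf := congrFun hflick ⟨(t / M + r) % d, Nat.mod_lt _ hd0⟩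
      rw [hpin] at hcf
      exact hcf
    · -- shallow case
      right
      push_neg at hdeep
      obtain ⟨B0, hB0⟩ : ∃ a, t / M = a := ⟨_, rfl⟩
      obtain ⟨Bj, hBj⟩ : ∃ a, jn / M = a := ⟨_, rfl⟩
      rw [hB0, hBj] at hB0Bj hdeep
      rw [hBj] at hBjM
      rw [hB0] at htB0
      refine ⟨Bj - B0, by omega, ?_, ?_, ?_⟩
      · rw [hBj]; omega
      · -- delta bound
        rw [hBj]
        apply delta_le'
        intro jj hjj
        have huntouch : ∀ t', jn - (jn - t) ≤ t' → t' < jn → (t' / M) % d ≠ (jj : ℕ) := by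
          intro t' h1 h2
          have hq1 : B0 ≤ t' / M := by rw [← hB0]; exact Nat.div_le_div_right (by omega)
          have hq2 : t' / M ≤ Bj := by rw [← hBj]; exact Nat.div_le_div_right (by omega)
          obtain ⟨a, ha⟩ : ∃ a, t' / M = a := ⟨_, rfl⟩
          rw [ha] at hq1 hq2 ⊢
          have h7 : a % d = (Bj % d + d - (Bj - a)) % d := by
            have h8 := mod_shift (show Bj - a ≤ Bj by omega) (show Bj - a ≤ d by omega) hd0
            rw [show Bj - (Bj - a) = a by omega] at h8
            exact h8
          intro hc
          exact hjj (Bj - a) (by omega) (by rw [← hc]; exact h7)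
        have hcf := congrFun hflick jj
        rw [gridFlickAux_untouched _ _ _ _ hkj jj huntouch] at hcf
        exact hcf
      · -- pinned middle blocks
        intro s hs
        rw [Finset.mem_Ico] at hs
        simp only [hBj]
        have hmul1 : (B0 + 1) * M ≤ (Bj - s) * M := Nat.mul_le_mul_right M (by omega)
        have hmul2 : (Bj - s + 1) * M ≤ Bj * M := Nat.mul_le_mul_right M (by omega)
        have hpin : gridFlickAux M (x jn) jn (extValsN ω) (jn - t)
            ⟨(Bj - s) % d, Nat.mod_lt _ hd0⟩ = extValsN ω (Bj - s) := by
          apply gridFlickAux_pin (x jn) jn (extValsN ω) (jn - t) (Bj - s) _ hM0 hkj rfl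
            (by omega) (by omega) ?_ hxj hwlt
          intro t' h1 h2
          have hq1 : B0 ≤ t' / M := by rw [← hB0]; exact Nat.div_le_div_right (by omega)
          obtain ⟨a, ha⟩ : ∃ a, t' / M = a := ⟨_, rfl⟩
          rw [ha] at hq1 ⊢
          have h4 : a * M ≤ t' := by rw [← ha]; exact Nat.div_mul_le_self t' M
          have hq2 : a < Bj - s := by
            by_contra hcon
            push_neg at hcon
            have h3 : (Bj - s) * M ≤ a * M := Nat.mul_le_mul_right M hcon
            omega
          have hne := mod_ne_helper (d := d) B0 (a - B0) (Bj - s - B0) (by omega) (by omega)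
          rw [show B0 + (a - B0) = a by omega,
            show B0 + (Bj - s - B0) = Bj - s by omega] at hne
          exact hne
        have hcf := congrFun hflick ⟨(Bj - s) % d, Nat.mod_lt _ hd0⟩
        rw [hpin] at hcf
        exact hcf

end Events

section EventCounts

open Finset

theorem deep_count {d M L : ℕ} (hd0 : 0 < d) (v : Fin d → ℕ) (B jn : ℕ)
    (hjn : jn < L) (hB : B + d ≤ jn / M) [DecidablePred (deepEv d M L hd0 v B)] :
    (Finset.univ.filter (fun ω : Fin L → Fin M => deepEv d M L hd0 v B ω)).card
      * M ^ (d - 1) ≤ M ^ L := by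
  classical
  have hdiv : jn / M ≤ jn := Nat.div_le_self _ _
  set S : Finset ℕ := (Finset.Ico 1 d).image (fun r => B + r) with hS
  have hSL : ∀ T ∈ S, T < L := by
    intro T hT
    rw [hS, Finset.mem_image] at hT
    obtain ⟨r, hr, rfl⟩ := hT
    rw [Finset.mem_Ico] at hr
    omega
  have hcard : S.card = d - 1 := by
    rw [hS, Finset.card_image_of_injective _ (add_right_injective B), Nat.card_Ico]
  have hsub : (Finset.univ.filter (fun ω : Fin L → Fin M => deepEv d M L hd0 v B ω))
      ⊆ (Finset.univ.filter (fun ω : Fin L → Fin M =>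
          ∀ T ∈ S, extValsN ω T = v ⟨T % d, Nat.mod_lt _ hd0⟩)) := by
    intro ω hω
    rw [Finset.mem_filter] at hω ⊢
    refine ⟨Finset.mem_univ _, ?_⟩
    intro T hT
    rw [hS, Finset.mem_image] at hT
    obtain ⟨r, hr, rfl⟩ := hT
    exact hω.2 r hr
  calc (Finset.univ.filter (fun ω : Fin L → Fin M => deepEv d M L hd0 v B ω)).card
        * M ^ (d - 1)
      ≤ (Finset.univ.filter (fun ω : Fin L → Fin M =>
          ∀ T ∈ S, extValsN ω T = v ⟨T % d, Nat.mod_lt _ hd0⟩)).card * M ^ (d - 1) :=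
        Nat.mul_le_mul_right _ (Finset.card_le_card hsub)
    _ = (Finset.univ.filter (fun ω : Fin L → Fin M =>
          ∀ T ∈ S, extValsN ω T = v ⟨T % d, Nat.mod_lt _ hd0⟩)).card * M ^ S.card := by
        rw [hcard]
    _ ≤ M ^ L := count_pin S hSL _

theorem sh_count {d M L : ℕ} (hd0 : 0 < d) (x : ℕ → Fin d → ℕ) (v : Fin d → ℕ)
    (r jn : ℕ) (hjn : jn < L) [DecidablePred (shEv d M L hd0 x v r jn)] :
    (Finset.univ.filter (fun ω : Fin L → Fin M => shEv d M L hd0 x v r jn ω)).card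
      * M ^ (r - 1) ≤ M ^ L := by
  classical
  by_cases hr : r ≤ jn / M
  · have hdiv : jn / M ≤ jn := Nat.div_le_self _ _
    set S : Finset ℕ := (Finset.Ico 1 r).image (fun s => jn / M - s) with hS
    have hSL : ∀ T ∈ S, T < L := by
      intro T hT
      rw [hS, Finset.mem_image] at hT
      obtain ⟨s, hs, rfl⟩ := hT
      omega
    have hcard : S.card = r - 1 := by
      rw [hS, Finset.card_image_of_injOn, Nat.card_Ico]
      intro s1 hs1 s2 hs2 hss
      rw [Finset.mem_coe, Finset.mem_Ico] at hs1 hs2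
      have hss2 : jn / M - s1 = jn / M - s2 := hss
      omega
    have hsub : (Finset.univ.filter (fun ω : Fin L → Fin M => shEv d M L hd0 x v r jn ω))
        ⊆ (Finset.univ.filter (fun ω : Fin L → Fin M =>
            ∀ T ∈ S, extValsN ω T = v ⟨T % d, Nat.mod_lt _ hd0⟩)) := by
      intro ω hω
      rw [Finset.mem_filter] at hω ⊢
      refine ⟨Finset.mem_univ _, ?_⟩
      intro T hT
      rw [hS, Finset.mem_image] at hT
      obtain ⟨s, hs, rfl⟩ := hT
      exact hω.2.2.2 s hs
    calc (Finset.univ.filter (fun ω : Fin L → Fin M => shEv d M L hd0 x v r jn ω)).card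
          * M ^ (r - 1)
        ≤ (Finset.univ.filter (fun ω : Fin L → Fin M =>
            ∀ T ∈ S, extValsN ω T = v ⟨T % d, Nat.mod_lt _ hd0⟩)).card * M ^ (r - 1) :=
          Nat.mul_le_mul_right _ (Finset.card_le_card hsub)
      _ = (Finset.univ.filter (fun ω : Fin L → Fin M =>
            ∀ T ∈ S, extValsN ω T = v ⟨T % d, Nat.mod_lt _ hd0⟩)).card * M ^ S.card := by
          rw [hcard]
      _ ≤ M ^ L := count_pin S hSL _
  · have : (Finset.univ.filter (fun ω : Fin L → Fin M => shEv d M L hd0 x v r jn ω)) = ∅ := by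
      apply Finset.filter_eq_empty_iff.mpr
      intro ω _
      exact fun hE => hr hE.1
    rw [this]
    simp

end EventCounts

/-- **Sparse grid snakes are unlikely to hit any given vertex when they flick their
tails.** Fix `d ≥ 3`. For every `c > 0` there is a `c' > 0` (depending only on `c` and
`d`) such that for all sufficiently large `N = M^d`, with `L = ⌊√N/100⌋`: if `x` is a
`c`-sparse snake in the support of the grid snake distribution `D_{h,L}` on
`{0,…,M-1}^d`, `j` is drawn uniformly from `{0,…,L-1}`, and `Y` is obtained from `x`
by flicking the tail at `j`, then for every vertex `v`,
`Pr_{j,Y}[v ∈ Y[j]] ≤ c'·(N^{1/d}·log N)/L`. -/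
theorem stmt_14 (d : ℕ) (hd : 3 ≤ d) :
    ∀ c > (0 : ℝ), ∃ c' > (0 : ℝ), ∃ M₀ : ℕ, ∀ M : ℕ, M₀ ≤ M →
      ∀ h : Fin d → ℕ, (∀ i, h i < M) →
        ∀ L : ℕ, L = ⌊Real.sqrt ((M : ℝ) ^ d) / 100⌋₊ →
          ∀ x : ℕ → Fin d → ℕ,
            (∃ u : ℕ → ℕ, (∀ T, u T < M) ∧ ∀ t < L, x t = gridSnake M h u t) →
            IsGridSparse c d M L x →
            ∀ v : Fin d → ℕ, (∀ i, v i < M) →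
              unifPr (fun σ : Fin L × (Fin L → Fin M) =>
                  ∃ t ≤ (σ.1 : ℕ), gridFlick M x (σ.1 : ℕ) (extValsN σ.2) t = v)
                ≤ c' * ((M : ℝ) * Real.log ((M : ℝ) ^ d)) / L := by
  intro c hc
  refine ⟨2 * d * (d + 1) * c + 1, by positivity, 100, ?_⟩
  intro M hM100 h hh L hL x hx hsp v hv
  obtain ⟨u, hu, hxg⟩ := hx
  classical
  have hd0 : 0 < d := by omega
  have hM0 : 0 < M := by omega
  have hM1R : (1 : ℝ) ≤ (M : ℝ) := by exact_mod_cast hM0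
  have hM100R : (100 : ℝ) ≤ (M : ℝ) := by exact_mod_cast hM100
  have hMd4 : (10000 : ℝ) ≤ (M : ℝ) ^ d := by
    calc (10000 : ℝ) = 100 ^ 2 := by norm_num
    _ ≤ 100 ^ d := by
        apply pow_le_pow_right₀ (by norm_num) (by omega)
    _ ≤ (M : ℝ) ^ d := by
        apply pow_le_pow_left₀ (by norm_num) hM100R
  have hsqrt100 : (100 : ℝ) ≤ Real.sqrt ((M : ℝ) ^ d) := by
    have h1 : Real.sqrt 10000 ≤ Real.sqrt ((M : ℝ) ^ d) := Real.sqrt_le_sqrt hMd4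
    have h2 : Real.sqrt 10000 = 100 := by
      rw [show (10000 : ℝ) = 100 ^ 2 by norm_num, Real.sqrt_sq (by norm_num)]
    linarith
  have hL1 : 1 ≤ L := by
    rw [hL]
    exact Nat.le_floor (by push_cast; linarith)
  have hLR : (L : ℝ) ≤ Real.sqrt ((M : ℝ) ^ d) / 100 := by
    rw [hL]
    exact Nat.floor_le (by positivity)
  have hL0R : (0 : ℝ) < (L : ℝ) := by exact_mod_cast hL1
  have hLsq : (L : ℝ) * (L : ℝ) ≤ (M : ℝ) ^ d := by
    have hs := Real.sq_sqrt (show (0 : ℝ) ≤ (M : ℝ) ^ d by positivity)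
    have hsn := Real.sqrt_nonneg ((M : ℝ) ^ d)
    nlinarith
  have hLMd1 : (L : ℝ) ≤ (M : ℝ) ^ (d - 1) := by
    have h2 : (M : ℝ) ^ d ≤ ((M : ℝ) ^ (d - 1)) ^ 2 := by
      rw [← pow_mul]
      apply pow_le_pow_right₀ hM1R (by omega)
    calc (L : ℝ) ≤ Real.sqrt ((M : ℝ) ^ d) / 100 := hLR
    _ ≤ Real.sqrt ((M : ℝ) ^ d) := by
        have := Real.sqrt_nonneg ((M : ℝ) ^ d); linarith
    _ ≤ Real.sqrt (((M : ℝ) ^ (d - 1)) ^ 2) := Real.sqrt_le_sqrt h2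
    _ = (M : ℝ) ^ (d - 1) := Real.sqrt_sq (by positivity)
  have hlog1 : (1 : ℝ) ≤ Real.log ((M : ℝ) ^ d) := by
    rw [Real.le_log_iff_exp_le (by positivity)]
    calc Real.exp 1 ≤ 10000 := by
          have := Real.exp_one_lt_d9; linarith
    _ ≤ (M : ℝ) ^ d := hMd4
  have hlog0 : (0 : ℝ) < Real.log ((M : ℝ) ^ d) := by linarith
  have hxjlt : ∀ jn < L, ∀ i, x jn i < M := by
    intro jn hjn i
    rw [hxg jn hjn]
    exact gridSnake_lt hh hu _ _
  -- names for events
  set Q := fun σ : Fin L × (Fin L → Fin M) =>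
    ∃ t ≤ (σ.1 : ℕ), gridFlick M x (σ.1 : ℕ) (extValsN σ.2) t = v with hQ
  set DP := fun σ : Fin L × (Fin L → Fin M) =>
    ∃ B, B + d ≤ (σ.1 : ℕ) / M ∧ deepEv d M L hd0 v B σ.2 with hDP
  set SP := fun (r : ℕ) (σ : Fin L × (Fin L → Fin M)) =>
    shEv d M L hd0 x v r (σ.1 : ℕ) σ.2 with hSP
  -- the uniform probability as a ratio of counts
  have hunif : unifPr Q = ((Finset.univ.filter Q).card : ℝ) / ((L : ℝ) * (M : ℝ) ^ L) := by
    unfold unifPr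
    rw [Nat.card_eq_fintype_card, Fintype.card_subtype]
    congr 1
    rw [Fintype.card_prod, Fintype.card_fun, Fintype.card_fin, Fintype.card_fin]
    push_cast
    ring
  -- covering
  have hcov : Finset.univ.filter Q ⊆
      (Finset.univ.filter DP) ∪
        (Finset.range d).biUnion (fun r => Finset.univ.filter (SP r)) := by
    intro σ hσ
    rw [Finset.mem_filter] at hσ
    rcases cover_lemma hd0 hM0 x v σ.1 σ.2 (hxjlt _ σ.1.isLt) hσ.2 with hD | ⟨r, hrd, hS⟩
    · exact Finset.mem_union_left _ (Finset.mem_filter.mpr ⟨Finset.mem_univ _, hD⟩)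
    · exact Finset.mem_union_right _ (Finset.mem_biUnion.mpr
        ⟨r, Finset.mem_range.mpr hrd, Finset.mem_filter.mpr ⟨Finset.mem_univ _, hS⟩⟩)
  have hsplitN : (Finset.univ.filter Q).card ≤
      (Finset.univ.filter DP).card + ∑ r ∈ Finset.range d, (Finset.univ.filter (SP r)).card := by
    refine le_trans (Finset.card_le_card hcov) (le_trans (Finset.card_union_le _ _) ?_)
    exact Nat.add_le_add_left Finset.card_biUnion_le _
  -- deep count
  have hDnat : (Finset.univ.filter DP).card * M ^ (d - 1) ≤ L * L * M ^ L := by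
    have hsub2 : Finset.univ.filter DP ⊆ (Finset.range L).biUnion (fun B =>
        Finset.univ.filter (fun σ : Fin L × (Fin L → Fin M) =>
          B + d ≤ (σ.1 : ℕ) / M ∧ deepEv d M L hd0 v B σ.2)) := by
      intro σ hσ
      rw [Finset.mem_filter] at hσ
      obtain ⟨B, hB1, hB2⟩ := hσ.2
      have hd1 : (σ.1 : ℕ) / M ≤ (σ.1 : ℕ) := Nat.div_le_self _ _
      have hd2 : (σ.1 : ℕ) < L := σ.1.isLt
      exact Finset.mem_biUnion.mpr ⟨B, Finset.mem_range.mpr (by omega),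
        Finset.mem_filter.mpr ⟨Finset.mem_univ _, hB1, hB2⟩⟩
    have hper : ∀ B, (Finset.univ.filter (fun σ : Fin L × (Fin L → Fin M) =>
        B + d ≤ (σ.1 : ℕ) / M ∧ deepEv d M L hd0 v B σ.2)).card * M ^ (d - 1)
          ≤ L * M ^ L := by
      intro B
      rw [card_filter_prod, Finset.sum_mul]
      calc ∑ jf : Fin L, (Finset.univ.filter (fun ω : Fin L → Fin M =>
              B + d ≤ (jf : ℕ) / M ∧ deepEv d M L hd0 v B ω)).card * M ^ (d - 1)
          ≤ ∑ _jf : Fin L, M ^ L := by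
            apply Finset.sum_le_sum
            intro jf _
            by_cases hcnd : B + d ≤ (jf : ℕ) / M
            · refine le_trans (Nat.mul_le_mul_right _ (Finset.card_le_card ?_))
                (deep_count hd0 v B jf jf.isLt hcnd)
              intro ω hω
              rw [Finset.mem_filter] at hω ⊢
              exact ⟨hω.1, hω.2.2⟩
            · have hemp : (Finset.univ.filter (fun ω : Fin L → Fin M =>
                  B + d ≤ (jf : ℕ) / M ∧ deepEv d M L hd0 v B ω)) = ∅ :=
                Finset.filter_eq_empty_iff.mpr (fun ω _ hp => hcnd hp.1)
              rw [hemp]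
              simp
        _ = L * M ^ L := by
            rw [Finset.sum_const, Finset.card_univ, Fintype.card_fin, smul_eq_mul]
    calc (Finset.univ.filter DP).card * M ^ (d - 1)
        ≤ (∑ B ∈ Finset.range L, (Finset.univ.filter (fun σ : Fin L × (Fin L → Fin M) =>
            B + d ≤ (σ.1 : ℕ) / M ∧ deepEv d M L hd0 v B σ.2)).card) * M ^ (d - 1) :=
          Nat.mul_le_mul_right _ (le_trans (Finset.card_le_card hsub2) Finset.card_biUnion_le)
      _ = ∑ B ∈ Finset.range L, (Finset.univ.filter (fun σ : Fin L × (Fin L → Fin M) =>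
            B + d ≤ (σ.1 : ℕ) / M ∧ deepEv d M L hd0 v B σ.2)).card * M ^ (d - 1) := by
          rw [Finset.sum_mul]
      _ ≤ ∑ _B ∈ Finset.range L, L * M ^ L := Finset.sum_le_sum (fun B _ => hper B)
      _ = L * L * M ^ L := by
          rw [Finset.sum_const, Finset.card_range, smul_eq_mul]; ring
  -- shallow counts
  have hSnat : ∀ r, (Finset.univ.filter (SP r)).card * M ^ (r - 1) ≤
      (Finset.univ.filter (fun jf : Fin L =>
        delta d (x (jf : ℕ)) v (((jf : ℕ) / M) % d) ≤ r + 1)).card * M ^ L := by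
    intro r
    rw [card_filter_prod, Finset.sum_mul]
    calc ∑ jf : Fin L, (Finset.univ.filter (fun ω : Fin L → Fin M =>
            SP r (jf, ω))).card * M ^ (r - 1)
        ≤ ∑ jf : Fin L, (if delta d (x (jf : ℕ)) v (((jf : ℕ) / M) % d) ≤ r + 1
            then M ^ L else 0) := by
          apply Finset.sum_le_sum
          intro jf _
          by_cases hdel : delta d (x (jf : ℕ)) v (((jf : ℕ) / M) % d) ≤ r + 1
          · rw [if_pos hdel]
            exact sh_count hd0 x v r (jf : ℕ) jf.isLt
          · rw [if_neg hdel]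
            have hemp : (Finset.univ.filter (fun ω : Fin L → Fin M => SP r (jf, ω))) = ∅ :=
              Finset.filter_eq_empty_iff.mpr (fun ω _ hp => hdel hp.2.1)
            rw [hemp]
            simp
      _ = (Finset.univ.filter (fun jf : Fin L =>
            delta d (x (jf : ℕ)) v (((jf : ℕ) / M) % d) ≤ r + 1)).card * M ^ L := by
          rw [Finset.sum_ite, Finset.sum_const_zero, add_zero, Finset.sum_const, smul_eq_mul]
  -- sparsity bound on the number of bad j's
  have hJle : ∀ r < d, ((Finset.univ.filter (fun jf : Fin L =>
      delta d (x (jf : ℕ)) v (((jf : ℕ) / M) % d) ≤ r + 1)).card : ℝ) ≤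
      ((d : ℝ) + 1) * (c * Real.log ((M : ℝ) ^ d)) *
        ((M : ℝ) + (L : ℝ) / (M : ℝ) ^ (d - (r + 1))) := by
    intro r hrd
    have he : (Finset.univ.filter (fun jf : Fin L =>
        delta d (x (jf : ℕ)) v (((jf : ℕ) / M) % d) ≤ r + 1)).card =
        ((Finset.range L).filter (fun n =>
          delta d (x n) v ((n / M) % d) ≤ r + 1)).card :=
      card_filter_fin (fun n => delta d (x n) v ((n / M) % d) ≤ r + 1)
    have hsubJ : ((Finset.range L).filter (fun n =>
        delta d (x n) v ((n / M) % d) ≤ r + 1)).card ≤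
        ∑ k ∈ Finset.range (r + 2), ((Finset.range L).filter (fun n =>
          delta d (x n) v ((n / M) % d) = k)).card := by
      refine le_trans (Finset.card_le_card ?_) Finset.card_biUnion_le
      intro n hn
      rw [Finset.mem_filter] at hn
      exact Finset.mem_biUnion.mpr ⟨delta d (x n) v ((n / M) % d),
        Finset.mem_range.mpr (by omega), Finset.mem_filter.mpr ⟨hn.1, rfl⟩⟩
    calc ((Finset.univ.filter (fun jf : Fin L =>
          delta d (x (jf : ℕ)) v (((jf : ℕ) / M) % d) ≤ r + 1)).card : ℝ)
        ≤ ∑ k ∈ Finset.range (r + 2), (((Finset.range L).filter (fun n =>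
            delta d (x n) v ((n / M) % d) = k)).card : ℝ) := by
          rw [he]
          exact_mod_cast hsubJ
      _ ≤ ∑ k ∈ Finset.range (r + 2),
            c * Real.log ((M : ℝ) ^ d) * ((M : ℝ) + (L : ℝ) / (M : ℝ) ^ (d - (r + 1))) := by
          apply Finset.sum_le_sum
          intro k hk
          rw [Finset.mem_range] at hk
          refine le_trans (hsp v hv k (by omega)) ?_
          have hpw : (M : ℝ) ^ (d - (r + 1)) ≤ (M : ℝ) ^ (d - k) :=
            pow_le_pow_right₀ hM1R (by omega)
          have hdiv : (L : ℝ) / (M : ℝ) ^ (d - k) ≤ (L : ℝ) / (M : ℝ) ^ (d - (r + 1)) :=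
            div_le_div_of_nonneg_left (by positivity) (by positivity) hpw
          have hnn : (0 : ℝ) ≤ c * Real.log ((M : ℝ) ^ d) := by positivity
          nlinarith
      _ = ((r : ℝ) + 2) * (c * Real.log ((M : ℝ) ^ d) *
            ((M : ℝ) + (L : ℝ) / (M : ℝ) ^ (d - (r + 1)))) := by
          rw [Finset.sum_const, Finset.card_range]
          push_cast
          ring
      _ ≤ ((d : ℝ) + 1) * (c * Real.log ((M : ℝ) ^ d) *
            ((M : ℝ) + (L : ℝ) / (M : ℝ) ^ (d - (r + 1)))) := by
          have hfac : ((r : ℝ) + 2) ≤ ((d : ℝ) + 1) := by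
            have : (r : ℝ) + 1 ≤ (d : ℝ) := by exact_mod_cast hrd
            linarith
          have hnn : (0 : ℝ) ≤ c * Real.log ((M : ℝ) ^ d) *
              ((M : ℝ) + (L : ℝ) / (M : ℝ) ^ (d - (r + 1))) := by positivity
          nlinarith
      _ = ((d : ℝ) + 1) * (c * Real.log ((M : ℝ) ^ d)) *
            ((M : ℝ) + (L : ℝ) / (M : ℝ) ^ (d - (r + 1))) := by ring
  -- real-valued per-term bounds
  have hpowL : (0 : ℝ) < (M : ℝ) ^ L := by positivity
  have hLne : (L : ℝ) ≠ 0 := ne_of_gt hL0R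
  have hMLne : (M : ℝ) ^ L ≠ 0 := ne_of_gt hpowL
  set lN := Real.log ((M : ℝ) ^ d) with hlN
  have hDreal : ((Finset.univ.filter DP).card : ℝ) / ((L : ℝ) * (M : ℝ) ^ L)
      ≤ (M : ℝ) * lN / (L : ℝ) := by
    have hDR : ((Finset.univ.filter DP).card : ℝ) * (M : ℝ) ^ (d - 1)
        ≤ (L : ℝ) * (L : ℝ) * (M : ℝ) ^ L := by exact_mod_cast hDnat
    have hMd1ne : (M : ℝ) ^ (d - 1) ≠ 0 := by positivity
    have hMd1M : (M : ℝ) ^ (d - 1) * (M : ℝ) = (M : ℝ) ^ d := by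
      rw [← pow_succ]
      congr 1
      omega
    have hstep1 : ((Finset.univ.filter DP).card : ℝ)
        ≤ (L : ℝ) * (L : ℝ) * (M : ℝ) ^ L / (M : ℝ) ^ (d - 1) :=
      (le_div_iff₀ (by positivity)).mpr hDR
    calc ((Finset.univ.filter DP).card : ℝ) / ((L : ℝ) * (M : ℝ) ^ L)
        ≤ ((L : ℝ) * (L : ℝ) * (M : ℝ) ^ L / (M : ℝ) ^ (d - 1)) / ((L : ℝ) * (M : ℝ) ^ L) :=
          (div_le_div_iff_of_pos_right (by positivity)).mpr hstep1
      _ = (L : ℝ) / (M : ℝ) ^ (d - 1) := by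
          field_simp
      _ ≤ (M : ℝ) * lN / (L : ℝ) := by
          rw [div_le_div_iff₀ (by positivity) hL0R]
          calc (L : ℝ) * (L : ℝ) ≤ (M : ℝ) ^ d := hLsq
          _ = (M : ℝ) ^ (d - 1) * (M : ℝ) * 1 := by rw [hMd1M]; ring
          _ ≤ (M : ℝ) ^ (d - 1) * (M : ℝ) * lN :=
              mul_le_mul_of_nonneg_left hlog1 (by positivity)
          _ = (M : ℝ) * lN * (M : ℝ) ^ (d - 1) := by ring
  have hSreal : ∀ r < d, ((Finset.univ.filter (SP r)).card : ℝ) / ((L : ℝ) * (M : ℝ) ^ L)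
      ≤ 2 * ((d : ℝ) + 1) * c * lN * (M : ℝ) / (L : ℝ) := by
    intro r hrd
    have hSR : ((Finset.univ.filter (SP r)).card : ℝ) * (M : ℝ) ^ (r - 1)
        ≤ ((Finset.univ.filter (fun jf : Fin L =>
            delta d (x (jf : ℕ)) v (((jf : ℕ) / M) % d) ≤ r + 1)).card : ℝ) * (M : ℝ) ^ L := by
      exact_mod_cast hSnat r
    have hJ := hJle r hrd
    have hMr1ne : (M : ℝ) ^ (r - 1) ≠ 0 := by positivity
    have hkey : (M : ℝ) + (L : ℝ) / (M : ℝ) ^ (d - (r + 1)) ≤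
        2 * (M : ℝ) * (M : ℝ) ^ (r - 1) := by
      have hone : (1 : ℝ) ≤ (M : ℝ) ^ (r - 1) := one_le_pow₀ hM1R
      have h1 : (M : ℝ) ≤ (M : ℝ) * (M : ℝ) ^ (r - 1) := by
        calc (M : ℝ) = (M : ℝ) * 1 := by ring
        _ ≤ (M : ℝ) * (M : ℝ) ^ (r - 1) := mul_le_mul_of_nonneg_left hone (by linarith)
      have h2 : (L : ℝ) / (M : ℝ) ^ (d - (r + 1)) ≤ (M : ℝ) * (M : ℝ) ^ (r - 1) := by
        rw [div_le_iff₀ (by positivity)]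
        have he1 : (M : ℝ) ^ (d - 1) ≤ (M : ℝ) ^ ((r - 1) + (d - (r + 1)) + 1) :=
          pow_le_pow_right₀ hM1R (by omega)
        calc (L : ℝ) ≤ (M : ℝ) ^ (d - 1) := hLMd1
        _ ≤ (M : ℝ) ^ ((r - 1) + (d - (r + 1)) + 1) := he1
        _ = (M : ℝ) * (M : ℝ) ^ (r - 1) * (M : ℝ) ^ (d - (r + 1)) := by
            rw [pow_succ, pow_add]
            ring
      linarith
    have hstep1 : ((Finset.univ.filter (SP r)).card : ℝ)
        ≤ ((Finset.univ.filter (fun jf : Fin L =>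
            delta d (x (jf : ℕ)) v (((jf : ℕ) / M) % d) ≤ r + 1)).card : ℝ) * (M : ℝ) ^ L
              / (M : ℝ) ^ (r - 1) :=
      (le_div_iff₀ (by positivity)).mpr hSR
    calc ((Finset.univ.filter (SP r)).card : ℝ) / ((L : ℝ) * (M : ℝ) ^ L)
        ≤ (((Finset.univ.filter (fun jf : Fin L =>
            delta d (x (jf : ℕ)) v (((jf : ℕ) / M) % d) ≤ r + 1)).card : ℝ) * (M : ℝ) ^ L
              / (M : ℝ) ^ (r - 1)) / ((L : ℝ) * (M : ℝ) ^ L) :=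
          (div_le_div_iff_of_pos_right (by positivity)).mpr hstep1
      _ = ((Finset.univ.filter (fun jf : Fin L =>
            delta d (x (jf : ℕ)) v (((jf : ℕ) / M) % d) ≤ r + 1)).card : ℝ)
              / ((M : ℝ) ^ (r - 1) * (L : ℝ)) := by
          field_simp
      _ ≤ (((d : ℝ) + 1) * (c * lN) * ((M : ℝ) + (L : ℝ) / (M : ℝ) ^ (d - (r + 1))))
              / ((M : ℝ) ^ (r - 1) * (L : ℝ)) :=
          (div_le_div_iff_of_pos_right (by positivity)).mpr hJ
      _ ≤ (((d : ℝ) + 1) * (c * lN) * (2 * (M : ℝ) * (M : ℝ) ^ (r - 1)))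
              / ((M : ℝ) ^ (r - 1) * (L : ℝ)) :=
          (div_le_div_iff_of_pos_right (by positivity)).mpr
            (mul_le_mul_of_nonneg_left hkey (by positivity))
      _ = 2 * ((d : ℝ) + 1) * c * lN * (M : ℝ) / (L : ℝ) := by
          field_simp
  -- final assembly
  rw [hunif]
  have hsplitR : ((Finset.univ.filter Q).card : ℝ) ≤
      ((Finset.univ.filter DP).card : ℝ) +
        ∑ r ∈ Finset.range d, ((Finset.univ.filter (SP r)).card : ℝ) := by
    exact_mod_cast hsplitN
  calc ((Finset.univ.filter Q).card : ℝ) / ((L : ℝ) * (M : ℝ) ^ L)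
      ≤ (((Finset.univ.filter DP).card : ℝ) +
          ∑ r ∈ Finset.range d, ((Finset.univ.filter (SP r)).card : ℝ))
            / ((L : ℝ) * (M : ℝ) ^ L) :=
        (div_le_div_iff_of_pos_right (by positivity)).mpr hsplitR
    _ = ((Finset.univ.filter DP).card : ℝ) / ((L : ℝ) * (M : ℝ) ^ L) +
          ∑ r ∈ Finset.range d,
            ((Finset.univ.filter (SP r)).card : ℝ) / ((L : ℝ) * (M : ℝ) ^ L) := by
        rw [add_div, Finset.sum_div]
    _ ≤ (M : ℝ) * lN / (L : ℝ) +
          ∑ _r ∈ Finset.range d, 2 * ((d : ℝ) + 1) * c * lN * (M : ℝ) / (L : ℝ) := by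
        refine add_le_add hDreal (Finset.sum_le_sum ?_)
        intro r hr
        exact hSreal r (Finset.mem_range.mp hr)
    _ = (M : ℝ) * lN / (L : ℝ) +
          (d : ℝ) * (2 * ((d : ℝ) + 1) * c * lN * (M : ℝ) / (L : ℝ)) := by
        rw [Finset.sum_const, Finset.card_range, nsmul_eq_mul]
    _ = (2 * d * (d + 1) * c + 1) * ((M : ℝ) * lN) / (L : ℝ) := by
        push_cast
        ring
end
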